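/- arXiv:0810.2157 — 2 statements merged into one kernel-verified Lean document; each statement's English description precedes it below -/
import Mathlib

section
/- Let ν be a positively homogeneous function of degree κ > 0 on ℝ^d, strictly positive outside 0 and continuous. Define ν(A) = sup_{x≠0} ν(Ax)/ν(x) and νₙ(𝒜) = max over n-fold products P of matrices from 𝒜 of ν(P). Then ρ(𝒜) = limsup_{n→∞} (νₙ(𝒜))^{1/(κn)}. -/
open Filter Set Topology

/-- The set of all products of exactly `n` matrices from `𝒜`. -/
def prods {d : ℕ} (𝒜 : Set (Matrix (Fin d) (Fin d) ℝ)) (n : ℕ) :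
    Set (Matrix (Fin d) (Fin d) ℝ) :=
  {P | ∃ l : List (Matrix (Fin d) (Fin d) ℝ), l.length = n ∧ (∀ A ∈ l, A ∈ 𝒜) ∧ l.prod = P}

/-- `‖𝒜ⁿ‖`: the supremum of the norm `N` over all `n`-fold products from `𝒜`. -/
noncomputable def supN {d : ℕ} (N : Matrix (Fin d) (Fin d) ℝ → ℝ)
    (𝒜 : Set (Matrix (Fin d) (Fin d) ℝ)) (n : ℕ) : ℝ :=
  sSup (N '' prods 𝒜 n)

/-- The joint spectral radius of `𝒜` with respect to the matrix norm `N`,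
given by the generalized Gelfand formula. -/
noncomputable def jsr {d : ℕ} (N : Matrix (Fin d) (Fin d) ℝ → ℝ)
    (𝒜 : Set (Matrix (Fin d) (Fin d) ℝ)) : ℝ :=
  Filter.limsup (fun n : ℕ => (supN N 𝒜 n) ^ ((n : ℝ)⁻¹)) Filter.atTop

/-- A (matrix) norm: nonnegative, definite, absolutely homogeneous, subadditive. -/
def IsMatNorm {d : ℕ} (N : Matrix (Fin d) (Fin d) ℝ → ℝ) : Prop :=
  (∀ A, 0 ≤ N A) ∧ (∀ A, N A = 0 ↔ A = 0) ∧
  (∀ (c : ℝ) A, N (c • A) = |c| * N A) ∧ (∀ A B, N (A + B) ≤ N A + N B)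

/-- The canonical operator norm of a matrix (induced by the sup norm on `ℝ^d`). -/
noncomputable def opNormC {d : ℕ} (A : Matrix (Fin d) (Fin d) ℝ) : ℝ :=
  ‖LinearMap.toContinuousLinearMap (Matrix.mulVecLin A)‖

/-- `ν(A) = sup_{x ≠ 0} ν(Ax)/ν(x)` for a positive homogeneous function `ν`. -/
noncomputable def nuMat {d : ℕ} (ν : (Fin d → ℝ) → ℝ)
    (A : Matrix (Fin d) (Fin d) ℝ) : ℝ :=
  sSup ((fun x => ν (A.mulVec x) / ν x) '' {x | x ≠ 0})

/-- `νₙ(𝒜)`: the maximum of `ν(P)` over all `n`-fold products `P` from `𝒜`. -/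
noncomputable def nuProd {d : ℕ} (ν : (Fin d → ℝ) → ℝ)
    (𝒜 : Set (Matrix (Fin d) (Fin d) ℝ)) (n : ℕ) : ℝ :=
  sSup ((nuMat ν) '' prods 𝒜 n)

lemma prods_zero {d : ℕ} (𝒜 : Set (Matrix (Fin d) (Fin d) ℝ)) : prods 𝒜 0 = {1} := by
  ext P
  constructor
  · rintro ⟨l, hlen, hmem, rfl⟩
    rw [List.length_eq_zero_iff] at hlen
    simp [hlen]
  · rintro rfl
    exact ⟨[], rfl, by simp, rfl⟩

lemma prods_succ {d : ℕ} (𝒜 : Set (Matrix (Fin d) (Fin d) ℝ)) (n : ℕ) :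
    prods 𝒜 (n + 1) = Set.image2 (· * ·) 𝒜 (prods 𝒜 n) := by
  ext P
  constructor
  · rintro ⟨l, hlen, hmem, rfl⟩
    cases l with
    | nil => simp at hlen
    | cons a t =>
      exact ⟨a, hmem a (by simp), t.prod,
        ⟨t, by simpa using hlen, fun A hA => hmem A (by simp [hA]), rfl⟩, by simp⟩
  · rintro ⟨a, ha, Q, ⟨t, hlen, hmem, rfl⟩, rfl⟩
    refine ⟨a :: t, by simp [hlen], ?_, by simp⟩
    intro A hA
    rcases List.mem_cons.mp hA with rfl | h
    · exact ha
    · exact hmem A h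

lemma prods_finite {d : ℕ} {𝒜 : Set (Matrix (Fin d) (Fin d) ℝ)} (hfin : 𝒜.Finite) (n : ℕ) :
    (prods 𝒜 n).Finite := by
  induction n with
  | zero => rw [prods_zero]; exact Set.finite_singleton 1
  | succ n ih => rw [prods_succ]; exact hfin.image2 _ ih

lemma prods_nonempty {d : ℕ} {𝒜 : Set (Matrix (Fin d) (Fin d) ℝ)} (h : 𝒜.Nonempty) (n : ℕ) :
    (prods 𝒜 n).Nonempty := by
  induction n with
  | zero => rw [prods_zero]; exact ⟨1, rfl⟩
  | succ n ih => rw [prods_succ]; exact h.image2 ih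

lemma opNormC_nonneg {d : ℕ} (A : Matrix (Fin d) (Fin d) ℝ) : 0 ≤ opNormC A :=
  norm_nonneg _

lemma mulVec_norm_le {d : ℕ} (A : Matrix (Fin d) (Fin d) ℝ) (x : Fin d → ℝ) :
    ‖A.mulVec x‖ ≤ opNormC A * ‖x‖ := by
  have := (LinearMap.toContinuousLinearMap (Matrix.mulVecLin A)).le_opNorm x
  simpa [opNormC] using this

lemma opNormC_le {d : ℕ} (A : Matrix (Fin d) (Fin d) ℝ) {c : ℝ} (hc : 0 ≤ c)
    (h : ∀ x, ‖A.mulVec x‖ ≤ c * ‖x‖) : opNormC A ≤ c :=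
  ContinuousLinearMap.opNorm_le_bound _ hc (by simpa using h)

lemma opNormC_mul_le {d : ℕ} (A B : Matrix (Fin d) (Fin d) ℝ) :
    opNormC (A * B) ≤ opNormC A * opNormC B := by
  apply opNormC_le _ (mul_nonneg (opNormC_nonneg A) (opNormC_nonneg B))
  intro x
  rw [← Matrix.mulVec_mulVec]
  calc ‖A.mulVec (B.mulVec x)‖ ≤ opNormC A * ‖B.mulVec x‖ := mulVec_norm_le A _
    _ ≤ opNormC A * (opNormC B * ‖x‖) :=
        mul_le_mul_of_nonneg_left (mulVec_norm_le B x) (opNormC_nonneg A)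
    _ = opNormC A * opNormC B * ‖x‖ := by ring

lemma opNormC_one_le {d : ℕ} : opNormC (1 : Matrix (Fin d) (Fin d) ℝ) ≤ 1 := by
  apply opNormC_le _ zero_le_one
  intro x
  simp [Matrix.one_mulVec]

lemma opNormC_prod_le {d : ℕ} {𝒜 : Set (Matrix (Fin d) (Fin d) ℝ)} {C : ℝ} (hC : 1 ≤ C)
    (hle : ∀ A ∈ 𝒜, opNormC A ≤ C) (l : List (Matrix (Fin d) (Fin d) ℝ))
    (hmem : ∀ A ∈ l, A ∈ 𝒜) : opNormC l.prod ≤ C ^ l.length := by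
  induction l with
  | nil => simpa using opNormC_one_le
  | cons a t ih =>
    simp only [List.prod_cons, List.length_cons, pow_succ]
    calc opNormC (a * t.prod) ≤ opNormC a * opNormC t.prod := opNormC_mul_le _ _
      _ ≤ C * C ^ t.length := by
          apply mul_le_mul (hle a (hmem a (by simp))) (ih fun A hA => hmem A (by simp [hA]))
            (opNormC_nonneg _) (le_trans zero_le_one hC)
      _ = C ^ t.length * C := by ring

lemma limsup_le_aux (u v : ℕ → ℝ) (hu0 : ∀ n, 0 ≤ u n) (hv0 : ∀ n, 0 ≤ v n)
    (hub : IsBoundedUnder (· ≤ ·) atTop u)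
    (h1 : ∀ ε : ℝ, 0 < ε → ∀ᶠ n in atTop, v n ≤ (1 + ε) * u n) :
    limsup v atTop ≤ limsup u atTop := by
  set L := limsup u atTop with hL
  have hcov : IsCoboundedUnder (· ≤ ·) atTop v :=
    isCoboundedUnder_le_of_le atTop hv0
  have hL0 : 0 ≤ L := le_limsup_of_frequently_le (Eventually.of_forall hu0).frequently hub
  have key : ∀ δ : ℝ, 0 < δ → limsup v atTop ≤ L + δ := by
    intro δ hδ
    have hpos : 0 < L + δ / 2 := by linarith
    set ε : ℝ := δ / (2 * (L + δ / 2)) with hε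
    have hε0 : 0 < ε := by positivity
    have hev : ∀ᶠ n in atTop, u n < L + δ / 2 :=
      eventually_lt_of_limsup_lt (by linarith) hub
    have hev2 := h1 ε hε0
    apply limsup_le_of_le hcov
    filter_upwards [hev, hev2] with n h3 h4
    have h5 : (1 + ε) * u n ≤ (1 + ε) * (L + δ / 2) :=
      mul_le_mul_of_nonneg_left h3.le (by linarith)
    have h6 : ε * (L + δ / 2) = δ / 2 := by
      rw [hε]; field_simp
    calc v n ≤ (1 + ε) * u n := h4
      _ ≤ (1 + ε) * (L + δ / 2) := h5
      _ = (L + δ / 2) + ε * (L + δ / 2) := by ring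
      _ = L + δ := by rw [h6]; ring
  exact le_of_forall_pos_le_add key

/-- for a continuous function `ν`, strictly positive outside `0` and
positively homogeneous of degree `κ > 0`, one has `ρ(𝒜) = limsup (νₙ(𝒜))^{1/(κn)}`. -/
theorem statement7 {d : ℕ} (𝒜 : Finset (Matrix (Fin d) (Fin d) ℝ)) (h𝒜 : 𝒜.Nonempty)
    (ν : (Fin d → ℝ) → ℝ) (κ : ℝ) (hκ : 0 < κ)
    (hcont : Continuous ν) (hpos : ∀ x, x ≠ 0 → 0 < ν x)
    (hhom : ∀ (t : ℝ), 0 < t → ∀ x, ν (t • x) = t ^ κ * ν x) :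
    jsr opNormC (↑𝒜 : Set (Matrix (Fin d) (Fin d) ℝ)) =
      Filter.limsup
        (fun n : ℕ => (nuProd ν (↑𝒜 : Set (Matrix (Fin d) (Fin d) ℝ)) n) ^ ((κ * n)⁻¹))
        Filter.atTop := by
  classical
  have hSne : (↑𝒜 : Set (Matrix (Fin d) (Fin d) ℝ)).Nonempty := by
    obtain ⟨A, hA⟩ := h𝒜; exact ⟨A, hA⟩
  have hPne : ∀ n, (prods (↑𝒜 : Set (Matrix (Fin d) (Fin d) ℝ)) n).Nonempty :=
    prods_nonempty hSne
  have hPfin : ∀ n, (prods (↑𝒜 : Set (Matrix (Fin d) (Fin d) ℝ)) n).Finite :=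
    prods_finite 𝒜.finite_toSet
  rcases Nat.eq_zero_or_pos d with hd | hd
  · -- degenerate case d = 0
    subst hd
    have hzero : ∀ A : Matrix (Fin 0) (Fin 0) ℝ, opNormC A = 0 := by
      intro A
      refine le_antisymm (opNormC_le A le_rfl fun x => ?_) (opNormC_nonneg A)
      rw [Subsingleton.elim (A.mulVec x) 0]
      simp
    have hν00 : ν (0 : Fin 0 → ℝ) = 0 := by
      have h := hhom 2 (by norm_num) 0
      rw [smul_zero] at h
      have h2 : (1:ℝ) < 2 ^ κ := by
        have := Real.rpow_lt_rpow_of_exponent_lt (by norm_num : (1:ℝ) < 2) hκ (y := 0)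
        simpa using this
      nlinarith
    have hnu : ∀ A : Matrix (Fin 0) (Fin 0) ℝ, nuMat ν A = 0 := by
      intro A
      have hempty : {x : Fin 0 → ℝ | x ≠ 0} = ∅ := by
        ext x
        simp [Subsingleton.elim x 0]
      have him : (fun x => ν (A.mulVec x) / ν x) '' {x : Fin 0 → ℝ | x ≠ 0} = ∅ := by
        rw [hempty, Set.image_empty]
      simp only [nuMat]
      rw [him, Real.sSup_empty]
    have hsupN : ∀ n, supN opNormC (↑𝒜 : Set (Matrix (Fin 0) (Fin 0) ℝ)) n = 0 := by
      intro n
      have him : opNormC '' prods (↑𝒜 : Set (Matrix (Fin 0) (Fin 0) ℝ)) n = {0} := by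
        rw [Set.image_congr fun A _ => hzero A]
        exact Set.Nonempty.image_const (hPne n) 0
      simp [supN, him]
    have hnuP : ∀ n, nuProd ν (↑𝒜 : Set (Matrix (Fin 0) (Fin 0) ℝ)) n = 0 := by
      intro n
      have him : nuMat ν '' prods (↑𝒜 : Set (Matrix (Fin 0) (Fin 0) ℝ)) n = {0} := by
        rw [Set.image_congr fun A _ => hnu A]
        exact Set.Nonempty.image_const (hPne n) 0
      simp [nuProd, him]
    apply limsup_congr
    filter_upwards [eventually_ge_atTop 1] with n hn
    have hn0 : (n : ℝ) ≠ 0 := Nat.cast_ne_zero.mpr (by omega)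
    rw [hsupN, hnuP, Real.zero_rpow (inv_ne_zero hn0),
      Real.zero_rpow (inv_ne_zero (mul_ne_zero hκ.ne' hn0))]
  · -- main case d ≥ 1
    haveI : Nonempty (Fin d) := ⟨⟨0, hd⟩⟩
    haveI : Nontrivial (Fin d → ℝ) := inferInstance
    have hsne : (Metric.sphere (0 : Fin d → ℝ) 1).Nonempty :=
      NormedSpace.sphere_nonempty.mpr zero_le_one
    obtain ⟨u, huS, hmin⟩ :=
      (isCompact_sphere (0 : Fin d → ℝ) 1).exists_isMinOn hsne hcont.continuousOn
    obtain ⟨w, hwS, hmax⟩ :=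
      (isCompact_sphere (0 : Fin d → ℝ) 1).exists_isMaxOn hsne hcont.continuousOn
    have hun : u ≠ 0 := by
      intro h
      rw [mem_sphere_zero_iff_norm, h, norm_zero] at huS
      exact one_ne_zero huS.symm
    set m := ν u with hm
    set M := ν w with hM
    have hm0 : 0 < m := hpos u hun
    have hmM : m ≤ M := hmin hwS
    have hM0 : 0 < M := lt_of_lt_of_le hm0 hmM
    have hν0 : ν 0 = 0 := by
      have h := hhom 2 (by norm_num) 0
      rw [smul_zero] at h
      have h2 : (1:ℝ) < 2 ^ κ := by
        have := Real.rpow_lt_rpow_of_exponent_lt (by norm_num : (1:ℝ) < 2) hκ (y := 0)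
        simpa using this
      nlinarith
    have hνnn : ∀ x, 0 ≤ ν x := by
      intro x
      by_cases hx : x = 0
      · simp [hx, hν0]
      · exact (hpos x hx).le
    have key : ∀ x : Fin d → ℝ, x ≠ 0 → m * ‖x‖ ^ κ ≤ ν x ∧ ν x ≤ M * ‖x‖ ^ κ := by
      intro x hx
      have hnx : 0 < ‖x‖ := norm_pos_iff.mpr hx
      have hu1 : ‖x‖⁻¹ • x ∈ Metric.sphere (0 : Fin d → ℝ) 1 := by
        rw [mem_sphere_zero_iff_norm, norm_smul, norm_inv, norm_norm,
          inv_mul_cancel₀ hnx.ne']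
      have hx1 : ν x = ‖x‖ ^ κ * ν (‖x‖⁻¹ • x) := by
        have h := hhom ‖x‖ hnx (‖x‖⁻¹ • x)
        rwa [smul_smul, mul_inv_cancel₀ hnx.ne', one_smul] at h
      have hκnn : (0:ℝ) ≤ ‖x‖ ^ κ := Real.rpow_nonneg hnx.le κ
      constructor
      · rw [hx1, mul_comm m]
        exact mul_le_mul_of_nonneg_left (hmin hu1) hκnn
      · rw [hx1, mul_comm M]
        exact mul_le_mul_of_nonneg_left (hmax hu1) hκnn
    set K : ℝ := M / m with hKdef
    have hK0 : 0 < K := div_pos hM0 hm0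
    have hK1 : 1 ≤ K := (one_le_div hm0).mpr hmM
    have hKm : K * m = M := by
      rw [hKdef]; field_simp
    -- ratio bounds
    have hratio_le : ∀ (A : Matrix (Fin d) (Fin d) ℝ) (x : Fin d → ℝ), x ≠ 0 →
        ν (A.mulVec x) / ν x ≤ K * opNormC A ^ κ := by
      intro A x hx
      have hνx : 0 < ν x := hpos x hx
      rw [div_le_iff₀ hνx]
      have hRHSnn : 0 ≤ K * opNormC A ^ κ * ν x :=
        mul_nonneg (mul_nonneg hK0.le (Real.rpow_nonneg (opNormC_nonneg A) κ)) (hνnn x)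
      by_cases hAx : A.mulVec x = 0
      · rw [hAx, hν0]; exact hRHSnn
      · have h1 : ν (A.mulVec x) ≤ M * ‖A.mulVec x‖ ^ κ := (key _ hAx).2
        have h2 : m * ‖x‖ ^ κ ≤ ν x := (key x hx).1
        have h3 : ‖A.mulVec x‖ ^ κ ≤ opNormC A ^ κ * ‖x‖ ^ κ := by
          rw [← Real.mul_rpow (opNormC_nonneg A) (norm_nonneg x)]
          exact Real.rpow_le_rpow (norm_nonneg _) (mulVec_norm_le A x) hκ.le
        calc ν (A.mulVec x) ≤ M * (opNormC A ^ κ * ‖x‖ ^ κ) :=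
              le_trans h1 (mul_le_mul_of_nonneg_left h3 hM0.le)
          _ = K * opNormC A ^ κ * (m * ‖x‖ ^ κ) := by rw [← hKm]; ring
          _ ≤ K * opNormC A ^ κ * ν x :=
              mul_le_mul_of_nonneg_left h2
                (mul_nonneg hK0.le (Real.rpow_nonneg (opNormC_nonneg A) κ))
    have hbdd : ∀ A : Matrix (Fin d) (Fin d) ℝ,
        BddAbove ((fun x => ν (A.mulVec x) / ν x) '' {x | x ≠ 0}) := by
      intro A
      refine ⟨K * opNormC A ^ κ, ?_⟩
      rintro r ⟨x, hx, rfl⟩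
      exact hratio_le A x hx
    have hnuMat_nonneg : ∀ A : Matrix (Fin d) (Fin d) ℝ, 0 ≤ nuMat ν A := by
      intro A
      have h0 : (0:ℝ) ≤ ν (A.mulVec u) / ν u := div_nonneg (hνnn _) (hνnn _)
      exact le_trans h0 (le_csSup (hbdd A) ⟨u, hun, rfl⟩)
    have hnuMat_le : ∀ A : Matrix (Fin d) (Fin d) ℝ, nuMat ν A ≤ K * opNormC A ^ κ := by
      intro A
      apply Real.sSup_le
      · rintro r ⟨x, hx, rfl⟩
        exact hratio_le A x hx
      · exact mul_nonneg hK0.le (Real.rpow_nonneg (opNormC_nonneg A) κ)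
    have hle_nuMat : ∀ A : Matrix (Fin d) (Fin d) ℝ, opNormC A ^ κ ≤ K * nuMat ν A := by
      intro A
      have hKnu : 0 ≤ K * nuMat ν A := mul_nonneg hK0.le (hnuMat_nonneg A)
      have hb : ∀ x : Fin d → ℝ, ‖A.mulVec x‖ ≤ (K * nuMat ν A) ^ κ⁻¹ * ‖x‖ := by
        intro x
        by_cases hx : x = 0
        · rw [hx, Matrix.mulVec_zero]
          simp [Real.rpow_nonneg hKnu]
        by_cases hAx : A.mulVec x = 0
        · rw [hAx, norm_zero]
          exact mul_nonneg (Real.rpow_nonneg hKnu _) (norm_nonneg x)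
        have hnx : 0 < ‖x‖ := norm_pos_iff.mpr hx
        have h1 : m * ‖A.mulVec x‖ ^ κ ≤ ν (A.mulVec x) := (key _ hAx).1
        have h2 : ν x ≤ M * ‖x‖ ^ κ := (key x hx).2
        have h3 : ν (A.mulVec x) / ν x ≤ nuMat ν A := le_csSup (hbdd A) ⟨x, hx, rfl⟩
        have hνx : 0 < ν x := hpos x hx
        have h4 : ν (A.mulVec x) ≤ nuMat ν A * ν x := (div_le_iff₀ hνx).mp h3
        have h5 : m * ‖A.mulVec x‖ ^ κ ≤ nuMat ν A * (M * ‖x‖ ^ κ) := by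
          calc m * ‖A.mulVec x‖ ^ κ ≤ ν (A.mulVec x) := h1
            _ ≤ nuMat ν A * ν x := h4
            _ ≤ nuMat ν A * (M * ‖x‖ ^ κ) :=
                mul_le_mul_of_nonneg_left h2 (hnuMat_nonneg A)
        have h6 : ‖A.mulVec x‖ ^ κ ≤ (K * nuMat ν A) * ‖x‖ ^ κ := by
          rw [← mul_le_mul_iff_right₀ hm0,
            show m * (K * nuMat ν A * ‖x‖ ^ κ) = nuMat ν A * (M * ‖x‖ ^ κ) from by
              rw [← hKm]; ring]
          exact h5
        have h7 : ‖A.mulVec x‖ ≤ ((K * nuMat ν A) * ‖x‖ ^ κ) ^ κ⁻¹ := by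
          have h8 := Real.rpow_le_rpow (Real.rpow_nonneg (norm_nonneg _) κ) h6
            (inv_nonneg.mpr hκ.le)
          rwa [Real.rpow_rpow_inv (norm_nonneg _) hκ.ne'] at h8
        calc ‖A.mulVec x‖ ≤ ((K * nuMat ν A) * ‖x‖ ^ κ) ^ κ⁻¹ := h7
          _ = (K * nuMat ν A) ^ κ⁻¹ * ‖x‖ := by
              rw [Real.mul_rpow hKnu (Real.rpow_nonneg (norm_nonneg x) κ),
                Real.rpow_rpow_inv (norm_nonneg x) hκ.ne']
      have h8 := opNormC_le A (Real.rpow_nonneg hKnu κ⁻¹) hb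
      have h9 := Real.rpow_le_rpow (opNormC_nonneg A) h8 hκ.le
      rwa [Real.rpow_inv_rpow hKnu hκ.ne'] at h9
    -- sup level
    have hbddN : ∀ n, BddAbove (opNormC '' prods (↑𝒜 : Set (Matrix (Fin d) (Fin d) ℝ)) n) :=
      fun n => ((hPfin n).image _).bddAbove
    have hbddnu : ∀ n, BddAbove (nuMat ν '' prods (↑𝒜 : Set (Matrix (Fin d) (Fin d) ℝ)) n) :=
      fun n => ((hPfin n).image _).bddAbove
    have hsN_nonneg : ∀ n, 0 ≤ supN opNormC (↑𝒜 : Set (Matrix (Fin d) (Fin d) ℝ)) n := by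
      intro n
      obtain ⟨P, hP⟩ := hPne n
      exact le_trans (opNormC_nonneg P) (le_csSup (hbddN n) ⟨P, hP, rfl⟩)
    have hnP_nonneg : ∀ n, 0 ≤ nuProd ν (↑𝒜 : Set (Matrix (Fin d) (Fin d) ℝ)) n := by
      intro n
      obtain ⟨P, hP⟩ := hPne n
      exact le_trans (hnuMat_nonneg P) (le_csSup (hbddnu n) ⟨P, hP, rfl⟩)
    have hnorm_le_sN : ∀ n, ∀ P ∈ prods (↑𝒜 : Set (Matrix (Fin d) (Fin d) ℝ)) n,
        opNormC P ≤ supN opNormC (↑𝒜 : Set (Matrix (Fin d) (Fin d) ℝ)) n :=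
      fun n P hP => le_csSup (hbddN n) ⟨P, hP, rfl⟩
    have hnP_le : ∀ n, nuProd ν (↑𝒜 : Set (Matrix (Fin d) (Fin d) ℝ)) n ≤
        K * (supN opNormC (↑𝒜 : Set (Matrix (Fin d) (Fin d) ℝ)) n) ^ κ := by
      intro n
      apply Real.sSup_le
      · rintro r ⟨P, hP, rfl⟩
        calc nuMat ν P ≤ K * opNormC P ^ κ := hnuMat_le P
          _ ≤ K * (supN opNormC (↑𝒜 : Set (Matrix (Fin d) (Fin d) ℝ)) n) ^ κ :=
              mul_le_mul_of_nonneg_left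
                (Real.rpow_le_rpow (opNormC_nonneg P) (hnorm_le_sN n P hP) hκ.le) hK0.le
      · exact mul_nonneg hK0.le (Real.rpow_nonneg (hsN_nonneg n) κ)
    have hsN_le : ∀ n, (supN opNormC (↑𝒜 : Set (Matrix (Fin d) (Fin d) ℝ)) n) ^ κ ≤
        K * nuProd ν (↑𝒜 : Set (Matrix (Fin d) (Fin d) ℝ)) n := by
      intro n
      have hKnP : 0 ≤ K * nuProd ν (↑𝒜 : Set (Matrix (Fin d) (Fin d) ℝ)) n :=
        mul_nonneg hK0.le (hnP_nonneg n)
      have h1 : supN opNormC (↑𝒜 : Set (Matrix (Fin d) (Fin d) ℝ)) n ≤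
          (K * nuProd ν (↑𝒜 : Set (Matrix (Fin d) (Fin d) ℝ)) n) ^ κ⁻¹ := by
        apply Real.sSup_le
        · rintro r ⟨P, hP, rfl⟩
          have h2 : opNormC P ^ κ ≤ K * nuProd ν (↑𝒜 : Set (Matrix (Fin d) (Fin d) ℝ)) n :=
            le_trans (hle_nuMat P)
              (mul_le_mul_of_nonneg_left (le_csSup (hbddnu n) ⟨P, hP, rfl⟩) hK0.le)
          have h3 := Real.rpow_le_rpow (Real.rpow_nonneg (opNormC_nonneg P) κ) h2
            (inv_nonneg.mpr hκ.le)
          rwa [Real.rpow_rpow_inv (opNormC_nonneg P) hκ.ne'] at h3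
        · exact Real.rpow_nonneg hKnP κ⁻¹
      have h2 := Real.rpow_le_rpow (hsN_nonneg n) h1 hκ.le
      rwa [Real.rpow_inv_rpow hKnP hκ.ne'] at h2
    -- the two sequences
    have hexp : ∀ n : ℕ, κ * (κ * (n:ℝ))⁻¹ = ((n:ℝ))⁻¹ := by
      intro n
      rw [mul_inv, ← mul_assoc, mul_inv_cancel₀ hκ.ne', one_mul]
    set f : ℕ → ℝ := fun n : ℕ =>
      (supN opNormC (↑𝒜 : Set (Matrix (Fin d) (Fin d) ℝ)) n) ^ ((n : ℝ)⁻¹) with hfdef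
    set g : ℕ → ℝ := fun n : ℕ =>
      (nuProd ν (↑𝒜 : Set (Matrix (Fin d) (Fin d) ℝ)) n) ^ ((κ * n)⁻¹) with hgdef
    have hf0 : ∀ n, 0 ≤ f n := fun n => Real.rpow_nonneg (hsN_nonneg n) _
    have hg0 : ∀ n, 0 ≤ g n := fun n => Real.rpow_nonneg (hnP_nonneg n) _
    have hgf : ∀ n : ℕ, g n ≤ K ^ ((κ * (n:ℝ))⁻¹) * f n := by
      intro n
      have e0 : (0:ℝ) ≤ (κ * (n:ℝ))⁻¹ := by positivity
      calc g n ≤ (K * (supN opNormC (↑𝒜 : Set (Matrix (Fin d) (Fin d) ℝ)) n) ^ κ) ^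
            ((κ * (n:ℝ))⁻¹) := Real.rpow_le_rpow (hnP_nonneg n) (hnP_le n) e0
        _ = K ^ ((κ * (n:ℝ))⁻¹) *
            ((supN opNormC (↑𝒜 : Set (Matrix (Fin d) (Fin d) ℝ)) n) ^ κ) ^ ((κ * (n:ℝ))⁻¹) :=
            Real.mul_rpow hK0.le (Real.rpow_nonneg (hsN_nonneg n) κ)
        _ = K ^ ((κ * (n:ℝ))⁻¹) * f n := by
            rw [← Real.rpow_mul (hsN_nonneg n), hexp n]
    have hfg : ∀ n : ℕ, f n ≤ K ^ ((κ * (n:ℝ))⁻¹) * g n := by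
      intro n
      have e0 : (0:ℝ) ≤ (κ * (n:ℝ))⁻¹ := by positivity
      calc f n = ((supN opNormC (↑𝒜 : Set (Matrix (Fin d) (Fin d) ℝ)) n) ^ κ) ^
            ((κ * (n:ℝ))⁻¹) := by rw [← Real.rpow_mul (hsN_nonneg n), hexp n]
        _ ≤ (K * nuProd ν (↑𝒜 : Set (Matrix (Fin d) (Fin d) ℝ)) n) ^ ((κ * (n:ℝ))⁻¹) :=
            Real.rpow_le_rpow (Real.rpow_nonneg (hsN_nonneg n) κ) (hsN_le n) e0
        _ = K ^ ((κ * (n:ℝ))⁻¹) * g n := Real.mul_rpow hK0.le (hnP_nonneg n)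
    have htend : Tendsto (fun n : ℕ => K ^ ((κ * (n:ℝ))⁻¹)) atTop (𝓝 1) := by
      have h1 : Tendsto (fun n : ℕ => (κ * (n:ℝ))⁻¹) atTop (𝓝 0) :=
        (Tendsto.const_mul_atTop hκ tendsto_natCast_atTop_atTop).inv_tendsto_atTop
      have h2 : ContinuousAt (fun x : ℝ => K ^ x) 0 :=
        Real.continuousAt_const_rpow hK0.ne'
      have h3 := h2.tendsto.comp h1
      rw [Real.rpow_zero] at h3; exact h3
    -- boundedness
    set C : ℝ := (𝒜.sup' h𝒜 opNormC) ⊔ 1 with hCdef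
    have hC1 : (1:ℝ) ≤ C := le_sup_right
    have hC0 : (0:ℝ) ≤ C := le_trans zero_le_one hC1
    have hCA : ∀ A ∈ (↑𝒜 : Set (Matrix (Fin d) (Fin d) ℝ)), opNormC A ≤ C := by
      intro A hA
      exact le_trans (Finset.le_sup' opNormC hA) le_sup_left
    have hfb : ∀ n, f n ≤ C := by
      intro n
      rcases Nat.eq_zero_or_pos n with rfl | hn
      · simp only [hfdef, Nat.cast_zero, inv_zero, Real.rpow_zero]
        exact hC1
      · have hsNle : supN opNormC (↑𝒜 : Set (Matrix (Fin d) (Fin d) ℝ)) n ≤ C ^ n := by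
          apply Real.sSup_le
          · rintro r ⟨P, ⟨l, hlen, hmem, rfl⟩, rfl⟩
            have h1 := opNormC_prod_le hC1 hCA l hmem
            rwa [hlen] at h1
          · exact pow_nonneg hC0 n
        have h2 : f n ≤ (C ^ n) ^ ((n:ℝ)⁻¹) :=
          Real.rpow_le_rpow (hsN_nonneg n) hsNle (by positivity)
        rwa [← Real.rpow_natCast C n, ← Real.rpow_mul hC0,
          mul_inv_cancel₀ (Nat.cast_ne_zero.mpr hn.ne' : (n:ℝ) ≠ 0), Real.rpow_one] at h2
    have hfB : IsBoundedUnder (· ≤ ·) atTop f := isBoundedUnder_of ⟨C, hfb⟩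
    have hexple : ∀ n : ℕ, ((κ * (n:ℝ))⁻¹ : ℝ) ≤ κ⁻¹ := by
      intro n
      rcases Nat.eq_zero_or_pos n with rfl | hn
      · simp [inv_nonneg.mpr hκ.le]
      · apply inv_anti₀ hκ
        nlinarith [(Nat.one_le_cast (α := ℝ)).mpr hn]
    have hgb : ∀ n, g n ≤ K ^ (κ⁻¹ : ℝ) * C := by
      intro n
      calc g n ≤ K ^ ((κ * (n:ℝ))⁻¹) * f n := hgf n
        _ ≤ K ^ (κ⁻¹ : ℝ) * C := by
            apply mul_le_mul (Real.rpow_le_rpow_of_exponent_le hK1 (hexple n)) (hfb n)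
              (hf0 n) (Real.rpow_nonneg (le_trans zero_le_one hK1) _)
    have hgB : IsBoundedUnder (· ≤ ·) atTop g := isBoundedUnder_of ⟨K ^ (κ⁻¹ : ℝ) * C, hgb⟩
    -- conclude
    have hev : ∀ ε : ℝ, 0 < ε → ∀ᶠ n : ℕ in atTop, K ^ ((κ * (n:ℝ))⁻¹) ≤ 1 + ε := by
      intro ε hε
      have := htend.eventually (eventually_le_nhds (by linarith : (1:ℝ) < 1 + ε))
      exact this
    have hmain : limsup f atTop = limsup g atTop := by
      apply le_antisymm
      · apply limsup_le_aux g f hg0 hf0 hgB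
        intro ε hε
        filter_upwards [hev ε hε] with n hn
        calc f n ≤ K ^ ((κ * (n:ℝ))⁻¹) * g n := hfg n
          _ ≤ (1 + ε) * g n := mul_le_mul_of_nonneg_right hn (hg0 n)
      · apply limsup_le_aux f g hf0 hg0 hfB
        intro ε hε
        filter_upwards [hev ε hε] with n hn
        calc g n ≤ K ^ ((κ * (n:ℝ))⁻¹) * f n := hgf n
          _ ≤ (1 + ε) * f n := mul_le_mul_of_nonneg_right hn (hf0 n)
    exact hmain
end

section
/- Let 𝒜 be a finite irreducible set of real d×d matrices and p ≥ d−1. Then for every n ≥ 1, ρ(𝒜) ≤ ‖𝒜ⁿ‖^{1/n} ≤ (η_p(𝒜))^{1/n} ρ(𝒜), where η_p(𝒜) = max{1, ρ(𝒜)^p} / χ_p(𝒜) and χ_p(𝒜) is the p-measure of irreducibility. -/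
open Filter Set

/-- Products of at most `p` factors from `𝒜` (including the empty product `1`). -/
def prodsLe {d : ℕ} (𝒜 : Set (Matrix (Fin d) (Fin d) ℝ)) (p : ℕ) :
    Set (Matrix (Fin d) (Fin d) ℝ) :=
  ⋃ k ∈ Finset.range (p + 1), prods 𝒜 k

/-- A vector norm on `ℝ^d`: nonnegative, definite, absolutely homogeneous, subadditive. -/
def IsNorm {d : ℕ} (ν : (Fin d → ℝ) → ℝ) : Prop :=
  (∀ x, 0 ≤ ν x) ∧ (∀ x, ν x = 0 ↔ x = 0) ∧
  (∀ (a : ℝ) x, ν (a • x) = |a| * ν x) ∧ (∀ x y, ν (x + y) ≤ ν x + ν y)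

/-- Operator norm of a matrix induced by the vector norm `ν` on `ℝ^d`. -/
noncomputable def opNorm {d : ℕ} (ν : (Fin d → ℝ) → ℝ)
    (A : Matrix (Fin d) (Fin d) ℝ) : ℝ :=
  sSup ((fun x => ν (A.mulVec x)) '' {x | ν x = 1})

/-- `‖𝒜ⁿ‖` computed with the operator norm induced by `ν`. -/
noncomputable def supNu {d : ℕ} (ν : (Fin d → ℝ) → ℝ)
    (𝒜 : Set (Matrix (Fin d) (Fin d) ℝ)) (n : ℕ) : ℝ :=
  supN (opNorm ν) 𝒜 n

/-- The joint spectral radius computed with the operator norm induced by `ν`. -/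
noncomputable def jsrNu {d : ℕ} (ν : (Fin d → ℝ) → ℝ)
    (𝒜 : Set (Matrix (Fin d) (Fin d) ℝ)) : ℝ :=
  jsr (opNorm ν) 𝒜

/-- The `p`-measure of irreducibility (quasi-controllability) of `𝒜`
with respect to the vector norm `ν`:
`χ_p(𝒜) = inf_{ν x = 1} sup { t : S(t) ⊆ conv(𝒜_p(x) ∪ 𝒜_p(−x)) }`. -/
noncomputable def chi {d : ℕ} (ν : (Fin d → ℝ) → ℝ)
    (𝒜 : Set (Matrix (Fin d) (Fin d) ℝ)) (p : ℕ) : ℝ :=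
  sInf ((fun x => sSup {t : ℝ | 0 ≤ t ∧
      {y | ν y ≤ t} ⊆ convexHull ℝ
        (((fun A => A.mulVec x) '' prodsLe 𝒜 p) ∪
         ((fun A => A.mulVec (-x)) '' prodsLe 𝒜 p))}) '' {x | ν x = 1})

/-- `𝒜` is irreducible: the only common invariant subspaces are `⊥` and `⊤`. -/
def MatSetIrreducible {d : ℕ} (𝒜 : Set (Matrix (Fin d) (Fin d) ℝ)) : Prop :=
  ∀ L : Submodule ℝ (Fin d → ℝ), (∀ A ∈ 𝒜, ∀ x ∈ L, A.mulVec x ∈ L) → L = ⊥ ∨ L = ⊤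
namespace S8
variable {d : ℕ}

/-- standard basis -/
def bas (d : ℕ) (i : Fin d) : Fin d → ℝ := fun j => if i = j then 1 else 0

section NuBasic
variable {ν : (Fin d → ℝ) → ℝ} (hν : IsNorm ν)
include hν

lemma nu_zero : ν 0 = 0 := (hν.2.1 0).mpr rfl

lemma nu_nonneg (x) : 0 ≤ ν x := hν.1 x

lemma nu_smul (a : ℝ) (x) : ν (a • x) = |a| * ν x := hν.2.2.1 a x

lemma nu_neg (x) : ν (-x) = ν x := by
  have := hν.2.2.1 (-1) x
  simpa using this

lemma nu_pos {x} (hx : x ≠ 0) : 0 < ν x :=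
  lt_of_le_of_ne (hν.1 x) (fun h => hx ((hν.2.1 x).mp h.symm))

lemma nu_sum_le {ι : Type*} (s : Finset ι) (f : ι → Fin d → ℝ) :
    ν (∑ i ∈ s, f i) ≤ ∑ i ∈ s, ν (f i) := by
  classical
  induction s using Finset.induction with
  | empty => simp [nu_zero hν]
  | @insert a s h ih =>
    rw [Finset.sum_insert h, Finset.sum_insert h]
    exact le_trans (hν.2.2.2 _ _) (by linarith [ih])

lemma convexOn_nu : ConvexOn ℝ Set.univ ν := by
  refine ⟨convex_univ, fun x _ y _ a b ha hb _ => ?_⟩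
  calc ν (a • x + b • y) ≤ ν (a • x) + ν (b • y) := hν.2.2.2 _ _
  _ = a * ν x + b * ν y := by rw [nu_smul hν, nu_smul hν, abs_of_nonneg ha, abs_of_nonneg hb]

/-- upper equivalence constant -/
lemma nu_le_const : ∃ b : ℝ, 0 < b ∧ ∀ x, ν x ≤ b * ‖x‖ := by
  classical
  refine ⟨(∑ i : Fin d, ν (bas d i)) + 1, ?_, fun x => ?_⟩
  · have : ∀ i : Fin d, (0:ℝ) ≤ ν (bas d i) := fun i => hν.1 _
    have := Finset.sum_nonneg (fun i (_ : i ∈ Finset.univ) => this i)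
    linarith
  · calc ν x = ν (∑ i : Fin d, x i • bas d i) := by
          congr 1; exact pi_eq_sum_univ x
    _ ≤ ∑ i : Fin d, ν (x i • bas d i) := nu_sum_le hν _ _
    _ = ∑ i : Fin d, |x i| * ν (bas d i) := by
          simp only [nu_smul hν]
    _ ≤ ∑ i : Fin d, ‖x‖ * ν (bas d i) := by
          refine Finset.sum_le_sum fun i _ => ?_
          refine mul_le_mul_of_nonneg_right ?_ (hν.1 _)
          have := norm_le_pi_norm x i
          simpa [Real.norm_eq_abs] using this
    _ = (∑ i : Fin d, ν (bas d i)) * ‖x‖ := by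
          rw [Finset.sum_mul]; exact Finset.sum_congr rfl (fun i _ => mul_comm _ _)
    _ ≤ ((∑ i : Fin d, ν (bas d i)) + 1) * ‖x‖ := by
          have h0 : (0:ℝ) ≤ ‖x‖ := norm_nonneg x
          nlinarith

lemma lipschitz_nu : ∃ b : ℝ, 0 < b ∧ ∀ x y, |ν x - ν y| ≤ b * ‖x - y‖ := by
  obtain ⟨b, hb, h⟩ := nu_le_const hν
  refine ⟨b, hb, fun x y => ?_⟩
  have h1 : ν x ≤ ν y + ν (x - y) := by
    have := hν.2.2.2 (y) (x - y); simpa using this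
  have h2 : ν y ≤ ν x + ν (y - x) := by
    have := hν.2.2.2 (x) (y - x); simpa using this
  have h3 : ν (y - x) = ν (x - y) := by
    rw [← nu_neg hν (x - y)]; congr 1; abel
  have := h (x - y)
  rw [abs_le]; constructor <;> nlinarith [hν.1 (x - y)]

lemma continuous_nu : Continuous ν := by
  obtain ⟨b, hb, h⟩ := lipschitz_nu hν
  apply continuous_iff_continuousAt.2 (fun x => ?_)
  have habs : Filter.Tendsto (fun y => |ν y - ν x|) (nhds x) (nhds 0) := by
    apply squeeze_zero (fun y => abs_nonneg _) (fun y => h y x)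
    have hc : Continuous fun y : Fin d → ℝ => b * ‖y - x‖ := by continuity
    have := hc.tendsto x
    simpa using this
  have h2 : Filter.Tendsto (fun y => ν y - ν x) (nhds x) (nhds 0) := by
    rw [tendsto_zero_iff_abs_tendsto_zero]; exact habs
  have := h2.add_const (ν x)
  have h3 : Filter.Tendsto (fun y => ν y) (nhds x) (nhds (ν x)) := by simpa using this
  exact h3

/-- lower equivalence constant -/
lemma const_le_nu : ∃ a : ℝ, 0 < a ∧ ∀ x, a * ‖x‖ ≤ ν x := by
  rcases isEmpty_or_nonempty (Fin d) with hd | hd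
  · refine ⟨1, one_pos, fun x => ?_⟩
    have hx : x = 0 := funext fun i => (hd.false i).elim
    simp [hx, nu_zero hν]
  · have hcs : IsCompact (Metric.sphere (0 : Fin d → ℝ) 1) := isCompact_sphere 0 1
    have hne : (Metric.sphere (0 : Fin d → ℝ) 1).Nonempty := by
      exact NormedSpace.sphere_nonempty.2 (by norm_num)
    obtain ⟨z, hz, hmin⟩ := hcs.exists_isMinOn hne (continuous_nu hν).continuousOn
    have hz1 : ‖z‖ = 1 := by simpa using hz
    have hzne : z ≠ 0 := by intro h; rw [h] at hz1; simp at hz1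
    refine ⟨ν z, nu_pos hν hzne, fun x => ?_⟩
    rcases eq_or_ne x 0 with rfl | hx
    · simp [nu_zero hν]
    · have hnx : (0:ℝ) < ‖x‖ := norm_pos_iff.2 hx
      have hu : (‖x‖⁻¹ • x) ∈ Metric.sphere (0 : Fin d → ℝ) 1 := by
        simp [norm_smul, abs_of_pos (inv_pos.2 hnx), inv_mul_cancel₀ hnx.ne']
      have hm : ν z ≤ ν (‖x‖⁻¹ • x) := hmin hu
      have h2 : ν (‖x‖⁻¹ • x) = ‖x‖⁻¹ * ν x := by
        rw [nu_smul hν, abs_of_pos (inv_pos.2 hnx)]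
      rw [h2] at hm
      calc ν z * ‖x‖ ≤ (‖x‖⁻¹ * ν x) * ‖x‖ :=
        mul_le_mul_of_nonneg_right hm (norm_nonneg x)
      _ = ν x := by field_simp

end NuBasic
end S8
namespace S8
open Matrix
variable {d : ℕ}

lemma prods_zero (S : Set (Matrix (Fin d) (Fin d) ℝ)) : prods S 0 = {1} := by
  ext P
  constructor
  · rintro ⟨l, hl, -, hp⟩
    rw [List.length_eq_zero_iff] at hl
    subst hl; simp at hp; simp [hp.symm]
  · rintro rfl
    exact ⟨[], rfl, by simp, rfl⟩

lemma mem_prods_mul {S : Set (Matrix (Fin d) (Fin d) ℝ)} {m n : ℕ}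
    {P Q : Matrix (Fin d) (Fin d) ℝ} (hP : P ∈ prods S m) (hQ : Q ∈ prods S n) :
    P * Q ∈ prods S (m + n) := by
  obtain ⟨l, hl, hmem, rfl⟩ := hP
  obtain ⟨l', hl', hmem', rfl⟩ := hQ
  exact ⟨l ++ l', by simp [hl, hl'], by
    intro A hA; rcases List.mem_append.1 hA with h | h; exacts [hmem A h, hmem' A h],
    by rw [List.prod_append]⟩

lemma prods_succ (S : Set (Matrix (Fin d) (Fin d) ℝ)) (n : ℕ) :
    prods S (n + 1) = {P | ∃ A ∈ S, ∃ Q ∈ prods S n, A * Q = P} := by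
  ext P
  constructor
  · rintro ⟨l, hl, hmem, rfl⟩
    rcases l with _ | ⟨A, t⟩
    · simp at hl
    · refine ⟨A, hmem A (by simp), t.prod, ⟨t, by simpa using hl, fun B hB => hmem B (by simp [hB]), rfl⟩, by simp⟩
  · rintro ⟨A, hA, Q, ⟨l, hl, hmem, rfl⟩, rfl⟩
    exact ⟨A :: l, by simp [hl], by
      rintro B hB; rcases List.mem_cons.1 hB with rfl | h; exacts [hA, hmem B h], by simp⟩

noncomputable def Fprods (𝒜 : Finset (Matrix (Fin d) (Fin d) ℝ)) : ℕ → Finset (Matrix (Fin d) (Fin d) ℝ)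
  | 0 => {1}
  | (n+1) => by classical exact Finset.image₂ (· * ·) 𝒜 (Fprods 𝒜 n)

lemma coe_Fprods (𝒜 : Finset (Matrix (Fin d) (Fin d) ℝ)) (n : ℕ) :
    (↑(Fprods 𝒜 n) : Set (Matrix (Fin d) (Fin d) ℝ)) = prods (↑𝒜) n := by
  induction n with
  | zero => simp [Fprods, prods_zero]
  | succ n ih =>
    rw [prods_succ]
    ext P
    simp only [Fprods, Finset.coe_image₂, Set.mem_image2]
    constructor
    · rintro ⟨A, hA, Q, hQ, rfl⟩
      exact ⟨A, hA, Q, by rw [← ih]; exact hQ, rfl⟩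
    · rintro ⟨A, hA, Q, hQ, rfl⟩
      exact ⟨A, hA, Q, by show Q ∈ (↑(Fprods 𝒜 n) : Set _); rw [ih]; exact hQ, rfl⟩

lemma Fprods_nonempty {𝒜 : Finset (Matrix (Fin d) (Fin d) ℝ)} (h𝒜 : 𝒜.Nonempty) (n : ℕ) :
    (Fprods 𝒜 n).Nonempty := by
  induction n with
  | zero => exact ⟨1, by simp [Fprods]⟩
  | succ n ih =>
    obtain ⟨A, hA⟩ := h𝒜
    obtain ⟨Q, hQ⟩ := ih
    exact ⟨A * Q, by classical simpa [Fprods] using Finset.mem_image₂_of_mem hA hQ⟩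

lemma prods_nonempty {𝒜 : Finset (Matrix (Fin d) (Fin d) ℝ)} (h𝒜 : 𝒜.Nonempty) (n : ℕ) :
    (prods (↑𝒜 : Set (Matrix (Fin d) (Fin d) ℝ)) n).Nonempty := by
  rw [← coe_Fprods]; exact Finset.coe_nonempty.2 (Fprods_nonempty h𝒜 n)

lemma prods_finite (𝒜 : Finset (Matrix (Fin d) (Fin d) ℝ)) (n : ℕ) :
    (prods (↑𝒜 : Set (Matrix (Fin d) (Fin d) ℝ)) n).Finite := by
  rw [← coe_Fprods]; exact (Fprods 𝒜 n).finite_toSet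

end S8
namespace S8
open Matrix
variable {d : ℕ}

lemma continuous_mulVec (A : Matrix (Fin d) (Fin d) ℝ) :
    Continuous fun x : Fin d → ℝ => A.mulVec x := by
  apply continuous_pi
  intro i
  simp only [Matrix.mulVec, dotProduct]
  exact continuous_finset_sum _ (fun j _ => continuous_const.mul (continuous_apply j))

section OpNorm
variable {ν : (Fin d → ℝ) → ℝ} (hν : IsNorm ν)
include hν

lemma sphere_nu_compact : IsCompact {x : Fin d → ℝ | ν x = 1} := by
  obtain ⟨a, ha, hle⟩ := const_le_nu hν
  apply Metric.isCompact_of_isClosed_isBounded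
  · exact isClosed_eq (continuous_nu hν) continuous_const
  · apply Metric.isBounded_iff_subset_closedBall (0 : Fin d → ℝ) |>.2
    refine ⟨a⁻¹, fun x hx => ?_⟩
    have : a * ‖x‖ ≤ 1 := by rw [← hx]; exact hle x
    simp only [Metric.mem_closedBall, dist_zero_right]
    have h2 : a * a⁻¹ = 1 := mul_inv_cancel₀ ha.ne'
    nlinarith

lemma sphere_nu_nonempty (hd : 0 < d) : {x : Fin d → ℝ | ν x = 1}.Nonempty := by
  have hb : bas d ⟨0, hd⟩ ≠ 0 := by
    intro h
    have := congrFun h ⟨0, hd⟩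
    simp [bas] at this
  have hpos := nu_pos hν hb
  refine ⟨(ν (bas d ⟨0, hd⟩))⁻¹ • bas d ⟨0, hd⟩, ?_⟩
  simp only [Set.mem_setOf_eq, nu_smul hν, abs_of_pos (inv_pos.2 hpos)]
  field_simp

lemma opNorm_bddAbove (A : Matrix (Fin d) (Fin d) ℝ) :
    BddAbove ((fun x => ν (A.mulVec x)) '' {x | ν x = 1}) := by
  have hc : IsCompact ((fun x => ν (A.mulVec x)) '' {x | ν x = 1}) :=
    (sphere_nu_compact hν).image ((continuous_nu hν).comp (continuous_mulVec A))
  exact hc.bddAbove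

lemma opNorm_nonneg (A : Matrix (Fin d) (Fin d) ℝ) : 0 ≤ opNorm ν A := by
  apply Real.sSup_nonneg
  rintro y ⟨x, -, rfl⟩
  exact hν.1 _

lemma le_opNorm {A : Matrix (Fin d) (Fin d) ℝ} {x : Fin d → ℝ} (hx : ν x = 1) :
    ν (A.mulVec x) ≤ opNorm ν A :=
  le_csSup (opNorm_bddAbove hν A) ⟨x, hx, rfl⟩

lemma nu_mulVec_le (A : Matrix (Fin d) (Fin d) ℝ) (x : Fin d → ℝ) :
    ν (A.mulVec x) ≤ opNorm ν A * ν x := by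
  rcases eq_or_ne x 0 with rfl | hx
  · simp [Matrix.mulVec_zero, nu_zero hν]
  · have hpos := nu_pos hν hx
    have hu : ν ((ν x)⁻¹ • x) = 1 := by
      rw [nu_smul hν, abs_of_pos (inv_pos.2 hpos)]; field_simp
    have h1 := le_opNorm hν (A := A) hu
    rw [Matrix.mulVec_smul, nu_smul hν, abs_of_pos (inv_pos.2 hpos)] at h1
    calc ν (A.mulVec x) = ((ν x)⁻¹ * ν (A.mulVec x)) * ν x := by field_simp
    _ ≤ opNorm ν A * ν x := mul_le_mul_of_nonneg_right h1 hpos.le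

lemma opNorm_le_of (hd : 0 < d) {A : Matrix (Fin d) (Fin d) ℝ} {C : ℝ}
    (h : ∀ x, ν x = 1 → ν (A.mulVec x) ≤ C) : opNorm ν A ≤ C := by
  apply csSup_le ((sphere_nu_nonempty hν hd).image _)
  rintro y ⟨x, hx, rfl⟩
  exact h x hx

lemma opNorm_mul_le (hd : 0 < d) (A B : Matrix (Fin d) (Fin d) ℝ) :
    opNorm ν (A * B) ≤ opNorm ν A * opNorm ν B := by
  apply opNorm_le_of hν hd
  intro x hx
  rw [← Matrix.mulVec_mulVec]
  calc ν (A.mulVec (B.mulVec x)) ≤ opNorm ν A * ν (B.mulVec x) := nu_mulVec_le hν A _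
  _ ≤ opNorm ν A * (opNorm ν B * ν x) :=
      mul_le_mul_of_nonneg_left (nu_mulVec_le hν B x) (opNorm_nonneg hν A)
  _ = opNorm ν A * opNorm ν B := by rw [hx, mul_one]

lemma opNorm_one (hd : 0 < d) : opNorm ν (1 : Matrix (Fin d) (Fin d) ℝ) = 1 := by
  unfold opNorm
  have : (fun x => ν ((1 : Matrix (Fin d) (Fin d) ℝ).mulVec x)) '' {x | ν x = 1} = {1} := by
    ext t
    constructor
    · rintro ⟨x, hx, rfl⟩
      have hx' : ν x = 1 := hx
      simp [Matrix.one_mulVec, hx']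
    · rintro rfl
      obtain ⟨x, hx⟩ := sphere_nu_nonempty hν hd
      have hx' : ν x = 1 := hx
      exact ⟨x, hx, by simp [Matrix.one_mulVec, hx']⟩
  rw [this, csSup_singleton]

end OpNorm

section SupNu
variable {ν : (Fin d → ℝ) → ℝ} (hν : IsNorm ν) {𝒜 : Finset (Matrix (Fin d) (Fin d) ℝ)}
include hν

omit hν in
lemma le_supNu {n : ℕ} {P : Matrix (Fin d) (Fin d) ℝ}
    (hP : P ∈ prods (↑𝒜 : Set (Matrix (Fin d) (Fin d) ℝ)) n) :
    opNorm ν P ≤ supNu ν ↑𝒜 n :=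
  le_csSup ((prods_finite 𝒜 n).image _).bddAbove ⟨P, hP, rfl⟩

omit hν in
lemma supNu_le (h𝒜 : 𝒜.Nonempty) {n : ℕ} {C : ℝ}
    (h : ∀ P ∈ prods (↑𝒜 : Set (Matrix (Fin d) (Fin d) ℝ)) n, opNorm ν P ≤ C) :
    supNu ν ↑𝒜 n ≤ C := by
  apply csSup_le ((prods_nonempty h𝒜 n).image _)
  rintro y ⟨P, hP, rfl⟩
  exact h P hP

lemma supNu_nonneg (n : ℕ) : 0 ≤ supNu ν (↑𝒜 : Set (Matrix (Fin d) (Fin d) ℝ)) n := by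
  apply Real.sSup_nonneg
  rintro y ⟨P, -, rfl⟩
  exact opNorm_nonneg hν P

lemma supNu_zero (hd : 0 < d) : supNu ν (↑𝒜 : Set (Matrix (Fin d) (Fin d) ℝ)) 0 = 1 := by
  unfold supNu supN
  rw [prods_zero]
  simp [opNorm_one hν hd]

lemma supNu_submul (h𝒜 : 𝒜.Nonempty) (hd : 0 < d) (m n : ℕ) :
    supNu ν (↑𝒜 : Set (Matrix (Fin d) (Fin d) ℝ)) (m + n) ≤
      supNu ν ↑𝒜 m * supNu ν ↑𝒜 n := by
  apply supNu_le h𝒜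
  rintro P ⟨l, hl, hmem, rfl⟩
  have hQ : (l.take m).prod ∈ prods (↑𝒜 : Set (Matrix (Fin d) (Fin d) ℝ)) m :=
    ⟨l.take m, by simp [hl], fun A hA => hmem A (List.mem_of_mem_take hA), rfl⟩
  have hR : (l.drop m).prod ∈ prods (↑𝒜 : Set (Matrix (Fin d) (Fin d) ℝ)) n :=
    ⟨l.drop m, by simp [hl], fun A hA => hmem A (List.mem_of_mem_drop hA), rfl⟩
  have hsplit : l.prod = (l.take m).prod * (l.drop m).prod := by
    rw [List.prod_take_mul_prod_drop]
  rw [hsplit]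
  calc opNorm ν ((l.take m).prod * (l.drop m).prod)
      ≤ opNorm ν (l.take m).prod * opNorm ν (l.drop m).prod := opNorm_mul_le hν hd _ _
  _ ≤ supNu ν ↑𝒜 m * supNu ν ↑𝒜 n :=
      mul_le_mul (le_supNu hQ) (le_supNu hR)
        (opNorm_nonneg hν _) (supNu_nonneg hν m)

end SupNu
end S8
namespace S8
open Filter Real

section Abstract
variable {u : ℕ → ℝ}

lemma u_pow_le (hu0 : ∀ m, 0 ≤ u m) (hsub : ∀ a b, u (a + b) ≤ u a * u b) (hu1 : u 0 = 1)
    (m : ℕ) : u m ≤ (u 1) ^ m := by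
  induction m with
  | zero => simp [hu1]
  | succ m ih =>
    calc u (m+1) ≤ u m * u 1 := hsub m 1
    _ ≤ (u 1)^m * u 1 := mul_le_mul_of_nonneg_right ih (hu0 1)
    _ = _ := by ring

lemma u_mul_le_pow (hu0 : ∀ m, 0 ≤ u m) (hsub : ∀ a b, u (a + b) ≤ u a * u b) (hu1 : u 0 = 1)
    (n q : ℕ) : u (n * q) ≤ (u n) ^ q := by
  induction q with
  | zero => simp [hu1]
  | succ q ih =>
    have h : n * (q + 1) = n * q + n := by ring
    rw [h]
    calc u (n*q + n) ≤ u (n*q) * u n := hsub _ _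
    _ ≤ (u n)^q * u n := mul_le_mul_of_nonneg_right ih (hu0 n)
    _ = _ := by ring

lemma u_root_le_B (hu0 : ∀ m, 0 ≤ u m) (hsub : ∀ a b, u (a + b) ≤ u a * u b) (hu1 : u 0 = 1)
    (m : ℕ) : (u m) ^ ((m:ℝ)⁻¹) ≤ max (u 1) 1 := by
  set B := max (u 1) 1 with hB
  have hB1 : (1:ℝ) ≤ B := le_max_right _ _
  have hB0 : (0:ℝ) ≤ B := le_trans zero_le_one hB1
  rcases Nat.eq_zero_or_pos m with rfl | hm
  · simpa using hB1
  · have hm0 : (0:ℝ) < m := by exact_mod_cast hm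
    have h1 : u m ≤ B ^ m := by
      calc u m ≤ (u 1)^m := u_pow_le hu0 hsub hu1 m
      _ ≤ B ^ m := pow_le_pow_left₀ (hu0 1) (le_max_left _ _) m
    calc (u m) ^ ((m:ℝ)⁻¹) ≤ (B ^ m) ^ ((m:ℝ)⁻¹) :=
      Real.rpow_le_rpow (hu0 m) h1 (by positivity)
    _ = B := by
        rw [← Real.rpow_natCast B m, ← Real.rpow_mul hB0,
          mul_inv_cancel₀ hm0.ne', Real.rpow_one]

set_option maxHeartbeats 1000000 in
lemma limsup_root_le (hu0 : ∀ m, 0 ≤ u m) (hsub : ∀ a b, u (a + b) ≤ u a * u b)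
    (hu1 : u 0 = 1) (n : ℕ) (hn : 1 ≤ n) :
    Filter.limsup (fun m : ℕ => (u m) ^ ((m:ℝ)⁻¹)) atTop ≤ (u n) ^ ((n:ℝ)⁻¹) := by
  have hcobdd : IsCoboundedUnder (· ≤ ·) atTop (fun m : ℕ => (u m) ^ ((m:ℝ)⁻¹)) :=
    (isBoundedUnder_of ⟨0, fun m => Real.rpow_nonneg (hu0 m) _⟩ :
      IsBoundedUnder (· ≥ ·) atTop _).isCoboundedUnder_le
  set s := u n with hsdef
  have hs0 : 0 ≤ s := hu0 n
  have hn0 : (0:ℝ) < n := by exact_mod_cast hn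
  rcases eq_or_lt_of_le hs0 with hzero | hpos
  · have hev : ∀ᶠ m in atTop, (u m) ^ ((m:ℝ)⁻¹) ≤ 0 := by
      filter_upwards [eventually_ge_atTop n] with m hm
      have h1 : u m ≤ s * u (m - n) := by
        have h2 := hsub n (m-n)
        rwa [Nat.add_sub_cancel' hm] at h2
      have h3 : u m = 0 := by nlinarith [hu0 m, hu0 (m-n)]
      have hm1 : (0:ℝ) < m := by
        have : (1:ℕ) ≤ m := le_trans hn hm
        exact_mod_cast this
      rw [h3, Real.zero_rpow (by positivity)]
    calc Filter.limsup (fun m : ℕ => (u m) ^ ((m:ℝ)⁻¹)) atTop ≤ 0 :=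
      limsup_le_of_le hcobdd hev
    _ ≤ s ^ ((n:ℝ)⁻¹) := Real.rpow_nonneg hs0 _
  · set B := max (u 1) 1 with hB
    have hB1 : (1:ℝ) ≤ B := le_max_right _ _
    have hB0 : (0:ℝ) ≤ B := le_trans zero_le_one hB1
    set E := max 1 s⁻¹ with hE
    have hE1 : (1:ℝ) ≤ E := le_max_left _ _
    set D := E * B ^ n with hD
    have hD1 : (1:ℝ) ≤ D := by
      have hBn : (1:ℝ) ≤ B^n := one_le_pow₀ hB1
      nlinarith
    have hDpos : (0:ℝ) < D := lt_of_lt_of_le one_pos hD1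
    set v := s ^ ((n:ℝ)⁻¹) with hv
    have hvpos : 0 < v := Real.rpow_pos_of_pos hpos _
    have key : ∀ m : ℕ, 1 ≤ m → (u m) ^ ((m:ℝ)⁻¹) ≤ v * D ^ ((m:ℝ)⁻¹) := by
      intro m hm
      have hmpos : (0:ℝ) < m := by exact_mod_cast hm
      set q := m / n with hq
      set r := m % n with hr
      have hdm : n * q + r = m := Nat.div_add_mod m n
      have hrn : r < n := Nat.mod_lt m (by omega)
      have h1 : u m ≤ s ^ q * B ^ n := by
        calc u m ≤ u (n*q) * u r := by
              have h2 := hsub (n*q) r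
              rwa [hdm] at h2
        _ ≤ s ^ q * B ^ n := by
              refine mul_le_mul (u_mul_le_pow hu0 hsub hu1 n q) ?_ (hu0 r) (pow_nonneg hs0 q)
              calc u r ≤ B ^ r := by
                    calc u r ≤ (u 1)^r := u_pow_le hu0 hsub hu1 r
                    _ ≤ B ^ r := pow_le_pow_left₀ (hu0 1) (le_max_left _ _) r
              _ ≤ B ^ n := pow_le_pow_right₀ hB1 hrn.le
      have h2 : (u m) ^ ((m:ℝ)⁻¹) ≤ (s ^ q * B ^ n) ^ ((m:ℝ)⁻¹) :=
        Real.rpow_le_rpow (hu0 m) h1 (by positivity)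
      have h3 : ((s ^ q * B ^ n : ℝ)) ^ ((m:ℝ)⁻¹) =
          ((s ^ q : ℝ)) ^ ((m:ℝ)⁻¹) * ((B ^ n : ℝ)) ^ ((m:ℝ)⁻¹) :=
        Real.mul_rpow (pow_nonneg hs0 _) (pow_nonneg hB0 _)
      have h4 : ((s ^ q : ℝ)) ^ ((m:ℝ)⁻¹) ≤ v * E ^ ((m:ℝ)⁻¹) := by
        have hrw : ((s ^ q : ℝ)) ^ ((m:ℝ)⁻¹) = s ^ ((q:ℝ) * (m:ℝ)⁻¹) := by
          rw [← Real.rpow_natCast s q, ← Real.rpow_mul hs0]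
        rw [hrw]
        rcases le_or_gt 1 s with hs1 | hs1
        · have hEeq : E = 1 := by
            rw [hE, max_eq_left]
            exact inv_le_one_of_one_le₀ hs1
          rw [hEeq, Real.one_rpow, mul_one, hv]
          apply Real.rpow_le_rpow_of_exponent_le hs1
          have hqn : (q:ℝ) * n ≤ m := by
            have h5 : q * n ≤ m := Nat.div_mul_le_self m n
            exact_mod_cast h5
          rw [show ((q:ℝ) * (m:ℝ)⁻¹) = (q:ℝ)/(m:ℝ) from (div_eq_mul_inv _ _).symm,
            show ((n:ℝ)⁻¹) = 1/(n:ℝ) from (one_div _).symm,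
            div_le_div_iff₀ hmpos hn0]
          nlinarith
        · have h1s : 1 ≤ s⁻¹ := by
            have := inv_mul_cancel₀ hpos.ne'
            nlinarith [inv_nonneg.2 hs0]
          have hEeq : E = s⁻¹ := max_eq_right h1s
          rw [hEeq, hv, Real.inv_rpow hs0, ← Real.rpow_neg hs0, ← Real.rpow_add hpos]
          apply Real.rpow_le_rpow_of_exponent_ge hpos hs1.le
          have hmlt : (m:ℝ) ≤ ((q:ℝ)+1) * n := by
            have h7 : m < (q + 1) * n := by
              calc m = n*q + r := hdm.symm
              _ < n*q + n := by omega
              _ = (q+1)*n := by ring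
            exact_mod_cast h7.le
          have hineq : (n:ℝ)⁻¹ ≤ ((q:ℝ)+1) * (m:ℝ)⁻¹ := by
            rw [show (((q:ℝ)+1) * (m:ℝ)⁻¹) = ((q:ℝ)+1)/(m:ℝ) from (div_eq_mul_inv _ _).symm,
              show ((n:ℝ)⁻¹) = 1/(n:ℝ) from (one_div _).symm,
              div_le_div_iff₀ hn0 hmpos]
            nlinarith
          have hmi : (0:ℝ) < (m:ℝ)⁻¹ := by positivity
          linarith
      have h5 : ((B ^ n : ℝ)) ^ ((m:ℝ)⁻¹) ≥ 0 := Real.rpow_nonneg (pow_nonneg hB0 _) _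
      have h6 : E ^ ((m:ℝ)⁻¹) * ((B ^ n : ℝ)) ^ ((m:ℝ)⁻¹) = D ^ ((m:ℝ)⁻¹) := by
        rw [hD, Real.mul_rpow (le_trans zero_le_one hE1) (pow_nonneg hB0 _)]
      calc (u m) ^ ((m:ℝ)⁻¹)
          ≤ ((s ^ q : ℝ)) ^ ((m:ℝ)⁻¹) * ((B ^ n : ℝ)) ^ ((m:ℝ)⁻¹) := by rw [← h3]; exact h2
      _ ≤ (v * E ^ ((m:ℝ)⁻¹)) * ((B ^ n : ℝ)) ^ ((m:ℝ)⁻¹) :=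
          mul_le_mul_of_nonneg_right h4 h5
      _ = v * (E ^ ((m:ℝ)⁻¹) * ((B ^ n : ℝ)) ^ ((m:ℝ)⁻¹)) := by ring
      _ = v * D ^ ((m:ℝ)⁻¹) := by rw [h6]
    have hlim : Tendsto (fun m : ℕ => D ^ ((m:ℝ)⁻¹)) atTop (nhds 1) := by
      have h0 : Tendsto (fun m : ℕ => ((m:ℝ))⁻¹) atTop (nhds 0) :=
        tendsto_inv_atTop_nhds_zero_nat
      have hc : ContinuousAt (fun t : ℝ => D ^ t) 0 := Real.continuousAt_const_rpow hDpos.ne'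
      have h8 := hc.tendsto.comp h0
      rw [Real.rpow_zero] at h8
      exact h8
    have hfin : ∀ ε : ℝ, 0 < ε →
        Filter.limsup (fun m : ℕ => (u m) ^ ((m:ℝ)⁻¹)) atTop ≤ v + ε := by
      intro ε hε
      have hev : ∀ᶠ m : ℕ in atTop, D ^ ((m:ℝ)⁻¹) < 1 + ε / v := by
        apply hlim.eventually_lt_const
        have : 0 < ε / v := div_pos hε hvpos
        linarith
      have hev2 : ∀ᶠ m : ℕ in atTop, (u m) ^ ((m:ℝ)⁻¹) ≤ v + ε := by
        filter_upwards [hev, eventually_ge_atTop 1] with m h1 h2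
        calc (u m) ^ ((m:ℝ)⁻¹) ≤ v * D ^ ((m:ℝ)⁻¹) := key m h2
        _ ≤ v * (1 + ε / v) := mul_le_mul_of_nonneg_left h1.le hvpos.le
        _ = v + ε := by field_simp
      exact limsup_le_of_le hcobdd hev2
    by_contra hcon
    push_neg at hcon
    have := hfin ((Filter.limsup (fun m : ℕ => (u m) ^ ((m:ℝ)⁻¹)) atTop - v)/2) (by linarith)
    linarith

end Abstract

section JSR
variable {d : ℕ} {ν : (Fin d → ℝ) → ℝ} {𝒜 : Finset (Matrix (Fin d) (Fin d) ℝ)}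
variable (hν : IsNorm ν) (h𝒜 : 𝒜.Nonempty) (hd : 0 < d)
include hν h𝒜 hd

lemma jsr_bddAbove :
    IsBoundedUnder (· ≤ ·) atTop
      (fun m : ℕ => (supNu ν (↑𝒜 : Set (Matrix (Fin d) (Fin d) ℝ)) m) ^ ((m:ℝ)⁻¹)) :=
  isBoundedUnder_of ⟨_, fun m =>
    u_root_le_B (fun k => supNu_nonneg hν k) (fun a b => supNu_submul hν h𝒜 hd a b)
      (supNu_zero hν hd) m⟩

lemma jsr_nonneg : 0 ≤ jsrNu ν (↑𝒜 : Set (Matrix (Fin d) (Fin d) ℝ)) := by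
  apply le_limsup_of_frequently_le _ (jsr_bddAbove hν h𝒜 hd)
  exact Frequently.of_forall (fun m => Real.rpow_nonneg (supNu_nonneg hν m) _)

lemma le_jsr_of_frequently {c : ℝ}
    (h : ∃ᶠ m in atTop, c ≤ (supNu ν (↑𝒜 : Set (Matrix (Fin d) (Fin d) ℝ)) m) ^ ((m:ℝ)⁻¹)) :
    c ≤ jsrNu ν (↑𝒜 : Set (Matrix (Fin d) (Fin d) ℝ)) :=
  le_limsup_of_frequently_le h (jsr_bddAbove hν h𝒜 hd)

lemma jsr_le_root (n : ℕ) (hn : 1 ≤ n) :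
    jsrNu ν (↑𝒜 : Set (Matrix (Fin d) (Fin d) ℝ)) ≤
      (supNu ν (↑𝒜 : Set (Matrix (Fin d) (Fin d) ℝ)) n) ^ ((n:ℝ)⁻¹) :=
  limsup_root_le (fun k => supNu_nonneg hν k) (fun a b => supNu_submul hν h𝒜 hd a b)
    (supNu_zero hν hd) n hn

end JSR
end S8
namespace S8
open Matrix
variable {d : ℕ}

lemma one_mem_prodsLe (S : Set (Matrix (Fin d) (Fin d) ℝ)) (p : ℕ) :
    1 ∈ prodsLe S p := by
  apply Set.mem_biUnion (Finset.mem_range.2 (Nat.succ_pos p))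
  rw [prods_zero]; rfl

lemma prodsLe_mono (S : Set (Matrix (Fin d) (Fin d) ℝ)) {p q : ℕ} (h : p ≤ q) :
    prodsLe S p ⊆ prodsLe S q := by
  intro z hz
  obtain ⟨k, hk, hzk⟩ := Set.mem_iUnion₂.1 hz
  exact Set.mem_biUnion (Finset.mem_range.2 (lt_of_lt_of_le (Finset.mem_range.1 hk) (by omega))) hzk

lemma mul_mem_prodsLe {S : Set (Matrix (Fin d) (Fin d) ℝ)} {A B : Matrix (Fin d) (Fin d) ℝ}
    {k : ℕ} (hA : A ∈ S) (hB : B ∈ prodsLe S k) : A * B ∈ prodsLe S (k+1) := by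
  obtain ⟨j, hj, hBj⟩ := Set.mem_iUnion₂.1 hB
  have hj' : j < k + 1 := Finset.mem_range.1 hj
  have hA1 : A ∈ prods S 1 := ⟨[A], rfl, by simpa using hA, by simp⟩
  have := mem_prods_mul hA1 hBj
  exact Set.mem_biUnion (Finset.mem_range.2 (by omega)) this

noncomputable def FprodsLe (𝒜 : Finset (Matrix (Fin d) (Fin d) ℝ)) (p : ℕ) :
    Finset (Matrix (Fin d) (Fin d) ℝ) := by
  classical exact (Finset.range (p+1)).biUnion (fun k => Fprods 𝒜 k)

lemma coe_FprodsLe (𝒜 : Finset (Matrix (Fin d) (Fin d) ℝ)) (p : ℕ) :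
    (↑(FprodsLe 𝒜 p) : Set (Matrix (Fin d) (Fin d) ℝ)) = prodsLe (↑𝒜) p := by
  classical
  ext z
  simp only [FprodsLe, Finset.coe_biUnion, Set.mem_iUnion, Finset.mem_coe, prodsLe]
  constructor
  · rintro ⟨k, hk, hz⟩
    exact ⟨k, hk, show z ∈ prods (↑𝒜 : Set (Matrix (Fin d) (Fin d) ℝ)) k by
      rw [← coe_Fprods]; exact hz⟩
  · intro hz
    obtain ⟨k, hk, hzk⟩ := hz
    exact ⟨k, hk, by rw [← Finset.mem_coe, coe_Fprods]; exact hzk⟩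

lemma prodsLe_finite (𝒜 : Finset (Matrix (Fin d) (Fin d) ℝ)) (p : ℕ) :
    (prodsLe (↑𝒜 : Set (Matrix (Fin d) (Fin d) ℝ)) p).Finite := by
  rw [← coe_FprodsLe]; exact (FprodsLe 𝒜 p).finite_toSet

lemma span_orbit_top {𝒜 : Finset (Matrix (Fin d) (Fin d) ℝ)}
    (hirr : MatSetIrreducible (↑𝒜 : Set (Matrix (Fin d) (Fin d) ℝ))) (hd : 0 < d)
    {p : ℕ} (hp : d - 1 ≤ p) {x : Fin d → ℝ} (hx : x ≠ 0) :
    Submodule.span ℝ ((fun A => A.mulVec x) ''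
      prodsLe (↑𝒜 : Set (Matrix (Fin d) (Fin d) ℝ)) p) = ⊤ := by
  set L : ℕ → Submodule ℝ (Fin d → ℝ) := fun k =>
    Submodule.span ℝ ((fun A => A.mulVec x) ''
      prodsLe (↑𝒜 : Set (Matrix (Fin d) (Fin d) ℝ)) k) with hL
  have hmono : ∀ k, L k ≤ L (k+1) := fun k =>
    Submodule.span_mono (Set.image_mono (prodsLe_mono _ (Nat.le_succ k)))
  have hxmem : ∀ k, x ∈ L k := fun k =>
    Submodule.subset_span ⟨1, one_mem_prodsLe _ k, Matrix.one_mulVec x⟩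
  have hstep : ∀ k, L (k+1) = L k → L k = ⊤ := by
    intro k heq
    have hinv : ∀ A ∈ (↑𝒜 : Set (Matrix (Fin d) (Fin d) ℝ)), ∀ z ∈ L k, A.mulVec z ∈ L k := by
      intro A hA z hz
      have hmap : Submodule.map (Matrix.mulVecLin A) (L k) ≤ L k := by
        rw [hL]
        simp only
        rw [Submodule.map_span]
        apply Submodule.span_le.2
        rintro _ ⟨_, ⟨B, hB, rfl⟩, rfl⟩
        have h1 : (A * B).mulVec x ∈ (fun C => C.mulVec x) ''
            prodsLe (↑𝒜 : Set (Matrix (Fin d) (Fin d) ℝ)) (k+1) :=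
          ⟨A * B, mul_mem_prodsLe hA hB, rfl⟩
        have h2 : (A * B).mulVec x ∈ L (k+1) := Submodule.subset_span h1
        rw [heq] at h2
        simpa [Matrix.mulVecLin_apply, Matrix.mulVec_mulVec] using h2
      exact hmap ⟨z, hz, rfl⟩
    rcases hirr (L k) hinv with hbot | htop
    · exfalso
      apply hx
      have := hxmem k
      rw [hbot] at this
      simpa using this
    · exact htop
  have hdim : ∀ k, L k = ⊤ ∨ (k+1) ≤ Module.finrank ℝ (L k) := by
    intro k
    induction k with
    | zero =>
      right
      have h1 : Submodule.span ℝ {x} ≤ L 0 :=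
        Submodule.span_le.2 (by intro z hz; rw [Set.mem_singleton_iff] at hz; rw [hz]; exact hxmem 0)
      calc 1 = Module.finrank ℝ (Submodule.span ℝ ({x} : Set (Fin d → ℝ))) :=
            (finrank_span_singleton hx).symm
      _ ≤ Module.finrank ℝ (L 0) := Submodule.finrank_mono h1
    | succ k ih =>
      rcases ih with htop | hrank
      · left
        exact top_unique (htop ▸ hmono k)
      · by_cases heq : L (k+1) = L k
        · left
          rw [heq]
          exact hstep k heq
        · right
          have hlt : L k < L (k+1) := lt_of_le_of_ne (hmono k) (Ne.symm heq)
          have := Submodule.finrank_lt_finrank_of_lt hlt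
          omega
  rcases hdim p with htop | hrank
  · exact htop
  · apply Submodule.eq_top_of_finrank_eq
    show Module.finrank ℝ (L p) = Module.finrank ℝ (Fin d → ℝ)
    have hle : Module.finrank ℝ (L p) ≤ Module.finrank ℝ (Fin d → ℝ) :=
      Submodule.finrank_le _
    have hfr : Module.finrank ℝ (Fin d → ℝ) = d := Module.finrank_fin_fun ℝ
    omega

end S8
namespace S8
open Matrix
variable {d : ℕ}

lemma one_mem_FprodsLe (𝒜 : Finset (Matrix (Fin d) (Fin d) ℝ)) (p : ℕ) :
    (1 : Matrix (Fin d) (Fin d) ℝ) ∈ FprodsLe 𝒜 p := by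
  rw [← Finset.mem_coe, coe_FprodsLe]
  exact one_mem_prodsLe _ _

lemma exists_kappa {𝒜 : Finset (Matrix (Fin d) (Fin d) ℝ)}
    (hirr : MatSetIrreducible (↑𝒜 : Set (Matrix (Fin d) (Fin d) ℝ))) (hd : 0 < d)
    {p : ℕ} (hp : d - 1 ≤ p) :
    ∃ κ : ℝ, 0 < κ ∧ ∀ x w : Fin d → ℝ, x ≠ 0 → w ≠ 0 →
      κ * (‖w‖ * ‖x‖) ≤ ∑ B ∈ FprodsLe 𝒜 p, |w ⬝ᵥ B.mulVec x| := by
  classical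
  haveI : Nonempty (Fin d) := ⟨⟨0, hd⟩⟩
  set K : Set ((Fin d → ℝ) × (Fin d → ℝ)) :=
    (Metric.sphere 0 1) ×ˢ (Metric.sphere 0 1) with hK
  have hKc : IsCompact K := (isCompact_sphere 0 1).prod (isCompact_sphere 0 1)
  have hsne : (Metric.sphere (0 : Fin d → ℝ) 1).Nonempty :=
    NormedSpace.sphere_nonempty.2 (by norm_num)
  have hKne : K.Nonempty := hsne.prod hsne
  set G : ((Fin d → ℝ) × (Fin d → ℝ)) → ℝ :=
    fun z => ∑ B ∈ FprodsLe 𝒜 p, |z.2 ⬝ᵥ B.mulVec z.1| with hG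
  have hGc : Continuous G := by
    apply continuous_finset_sum
    intro B _
    apply Continuous.abs
    simp only [dotProduct]
    apply continuous_finset_sum
    intro i _
    exact ((continuous_apply i).comp continuous_snd).mul
      (((continuous_apply i).comp (continuous_mulVec B)).comp continuous_fst)
  obtain ⟨z0, hz0K, hmin⟩ := hKc.exists_isMinOn hKne hGc.continuousOn
  have hx0 : ‖z0.1‖ = 1 := by simpa using hz0K.1
  have hw0 : ‖z0.2‖ = 1 := by simpa using hz0K.2
  have hx0ne : z0.1 ≠ 0 := by intro h; rw [h] at hx0; simp at hx0
  have hw0ne : z0.2 ≠ 0 := by intro h; rw [h] at hw0; simp at hw0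
  have hκpos : 0 < G z0 := by
    rcases lt_or_eq_of_le (Finset.sum_nonneg (fun B _ => abs_nonneg _) :
      (0:ℝ) ≤ G z0) with h | h
    · exact h
    · exfalso
      have hall : ∀ B ∈ FprodsLe 𝒜 p, z0.2 ⬝ᵥ B.mulVec z0.1 = 0 := by
        intro B hB
        have := (Finset.sum_eq_zero_iff_of_nonneg (fun B _ => abs_nonneg _)).1 h.symm B hB
        exact abs_eq_zero.1 this
      -- build the functional
      set f : (Fin d → ℝ) →ₗ[ℝ] ℝ :=
        { toFun := fun v => z0.2 ⬝ᵥ v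
          map_add' := fun v₁ v₂ => dotProduct_add _ _ _
          map_smul' := fun c v => by simp [dotProduct_smul] } with hf
      have hker : Submodule.span ℝ ((fun A => A.mulVec z0.1) ''
          prodsLe (↑𝒜 : Set (Matrix (Fin d) (Fin d) ℝ)) p) ≤ LinearMap.ker f := by
        apply Submodule.span_le.2
        rintro _ ⟨B, hB, rfl⟩
        have hBF : B ∈ FprodsLe 𝒜 p := by
          rw [← Finset.mem_coe, coe_FprodsLe]; exact hB
        exact LinearMap.mem_ker.2 (hall B hBF)
      rw [span_orbit_top hirr hd hp hx0ne] at hker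
      have : f z0.2 = 0 := LinearMap.mem_ker.1 (hker Submodule.mem_top)
      have hz2 : z0.2 ⬝ᵥ z0.2 = 0 := this
      exact hw0ne ((dotProduct_self_eq_zero).1 hz2)
  refine ⟨G z0, hκpos, fun x w hx hw => ?_⟩
  have hnx : (0:ℝ) < ‖x‖ := norm_pos_iff.2 hx
  have hnw : (0:ℝ) < ‖w‖ := norm_pos_iff.2 hw
  have hmem : ((‖x‖⁻¹ • x, ‖w‖⁻¹ • w) : (Fin d → ℝ) × (Fin d → ℝ)) ∈ K := by
    constructor <;>
      simp [norm_smul, abs_of_pos (inv_pos.2 hnx), abs_of_pos (inv_pos.2 hnw),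
        inv_mul_cancel₀ hnx.ne', inv_mul_cancel₀ hnw.ne']
  have hmin' : G z0 ≤ G (‖x‖⁻¹ • x, ‖w‖⁻¹ • w) := hmin hmem
  have hGval : G (‖x‖⁻¹ • x, ‖w‖⁻¹ • w) = (‖w‖⁻¹ * ‖x‖⁻¹) * ∑ B ∈ FprodsLe 𝒜 p, |w ⬝ᵥ B.mulVec x| := by
    rw [hG]
    simp only
    rw [Finset.mul_sum]
    apply Finset.sum_congr rfl
    intro B _
    rw [Matrix.mulVec_smul, smul_dotProduct, dotProduct_smul]
    rw [smul_eq_mul, smul_eq_mul, ← mul_assoc, abs_mul, abs_mul]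
    rw [abs_of_pos (inv_pos.2 hnw), abs_of_pos (inv_pos.2 hnx)]
  rw [hGval] at hmin'
  have h1 : G z0 * (‖w‖ * ‖x‖) ≤ ((‖w‖⁻¹ * ‖x‖⁻¹) * ∑ B ∈ FprodsLe 𝒜 p, |w ⬝ᵥ B.mulVec x|) * (‖w‖ * ‖x‖) :=
    mul_le_mul_of_nonneg_right hmin' (by positivity)
  calc G z0 * (‖w‖ * ‖x‖) ≤ _ := h1
  _ = ∑ B ∈ FprodsLe 𝒜 p, |w ⬝ᵥ B.mulVec x| := by
      field_simp

end S8
namespace S8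
open Matrix
variable {d : ℕ}

/-- The symmetric point set whose hull appears in `chi`. -/
def Tset (ν : (Fin d → ℝ) → ℝ) (𝒜 : Finset (Matrix (Fin d) (Fin d) ℝ)) (p : ℕ)
    (x : Fin d → ℝ) : Set (Fin d → ℝ) :=
  ((fun A => A.mulVec x) '' prodsLe (↑𝒜 : Set (Matrix (Fin d) (Fin d) ℝ)) p) ∪
    ((fun A => A.mulVec (-x)) '' prodsLe (↑𝒜 : Set (Matrix (Fin d) (Fin d) ℝ)) p)

lemma Tset_finite (ν : (Fin d → ℝ) → ℝ) (𝒜 : Finset (Matrix (Fin d) (Fin d) ℝ)) (p : ℕ)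
    (x : Fin d → ℝ) : (Tset ν 𝒜 p x).Finite :=
  ((prodsLe_finite 𝒜 p).image _).union ((prodsLe_finite 𝒜 p).image _)

lemma x_mem_Tset (ν : (Fin d → ℝ) → ℝ) (𝒜 : Finset (Matrix (Fin d) (Fin d) ℝ)) (p : ℕ)
    (x : Fin d → ℝ) : x ∈ Tset ν 𝒜 p x :=
  Or.inl ⟨1, one_mem_prodsLe _ _, Matrix.one_mulVec x⟩

lemma neg_x_mem_Tset (ν : (Fin d → ℝ) → ℝ) (𝒜 : Finset (Matrix (Fin d) (Fin d) ℝ)) (p : ℕ)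
    (x : Fin d → ℝ) : -x ∈ Tset ν 𝒜 p x :=
  Or.inr ⟨1, one_mem_prodsLe _ _, Matrix.one_mulVec (-x)⟩

lemma zero_mem_hull_Tset (ν : (Fin d → ℝ) → ℝ) (𝒜 : Finset (Matrix (Fin d) (Fin d) ℝ)) (p : ℕ)
    (x : Fin d → ℝ) : (0 : Fin d → ℝ) ∈ convexHull ℝ (Tset ν 𝒜 p x) := by
  have hx := subset_convexHull ℝ _ (x_mem_Tset ν 𝒜 p x)
  have hnx := subset_convexHull ℝ _ (neg_x_mem_Tset ν 𝒜 p x)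
  have := (convex_convexHull ℝ (Tset ν 𝒜 p x)) hx hnx
    (by norm_num : (0:ℝ) ≤ 1/2) (by norm_num : (0:ℝ) ≤ 1/2) (by norm_num)
  simpa using this

lemma chi_lb {ν : (Fin d → ℝ) → ℝ} (hν : IsNorm ν)
    {𝒜 : Finset (Matrix (Fin d) (Fin d) ℝ)}
    (hirr : MatSetIrreducible (↑𝒜 : Set (Matrix (Fin d) (Fin d) ℝ))) (hd : 0 < d)
    {p : ℕ} (hp : d - 1 ≤ p) :
    ∃ c : ℝ, 0 < c ∧ ∀ x : Fin d → ℝ, ν x = 1 →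
      {y | ν y ≤ c} ⊆ convexHull ℝ (Tset ν 𝒜 p x) := by
  classical
  obtain ⟨κ, hκ, hkap⟩ := exists_kappa hirr hd hp
  obtain ⟨a, ha, hale⟩ := const_le_nu hν
  obtain ⟨b, hb, hble⟩ := nu_le_const hν
  set N : ℕ := (FprodsLe 𝒜 p).card with hN
  have hNpos : 0 < N := Finset.card_pos.2 ⟨1, one_mem_FprodsLe 𝒜 p⟩
  have hNpos' : (0:ℝ) < N := by exact_mod_cast hNpos
  have hdpos : (0:ℝ) < d := by exact_mod_cast hd
  refine ⟨κ * a / (b * N * d * 2), by positivity, ?_⟩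
  intro x hx y hy
  by_contra hymem
  have hTconv : Convex ℝ (convexHull ℝ (Tset ν 𝒜 p x)) := convex_convexHull ℝ _
  have hTclosed : IsClosed (convexHull ℝ (Tset ν 𝒜 p x)) :=
    ((Tset_finite ν 𝒜 p x).isCompact_convexHull ℝ).isClosed
  obtain ⟨f, u, hfu, huy⟩ := geometric_hahn_banach_closed_point hTconv hTclosed hymem
  set w : Fin d → ℝ := fun i => f (bas d i) with hw
  have hfw : ∀ v, f v = w ⬝ᵥ v := by
    intro v
    conv_lhs => rw [pi_eq_sum_univ v]
    rw [map_sum]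
    rw [dotProduct]
    apply Finset.sum_congr rfl
    intro i _
    rw [_root_.map_smul, smul_eq_mul]
    exact mul_comm _ _
  have hu0 : 0 < u := by
    have h0 := hfu 0 (zero_mem_hull_Tset ν 𝒜 p x)
    simpa using h0
  have hwne : w ≠ 0 := by
    intro h
    have hfy : f y = 0 := by rw [hfw, h]; simp
    rw [hfy] at huy
    linarith
  have hxne : x ≠ 0 := by
    intro h
    rw [h, nu_zero hν] at hx
    norm_num at hx
  have hyne : y ≠ 0 := by
    intro h
    apply hymem
    rw [h]
    exact zero_mem_hull_Tset ν 𝒜 p x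
  -- each |w ⬝ᵥ B x| ≤ u
  have hbound : ∀ B ∈ FprodsLe 𝒜 p, |w ⬝ᵥ B.mulVec x| ≤ u := by
    intro B hB
    have hBp : B ∈ prodsLe (↑𝒜 : Set (Matrix (Fin d) (Fin d) ℝ)) p := by
      rw [← Finset.mem_coe, coe_FprodsLe] at hB; exact hB
    have h1 : f (B.mulVec x) < u :=
      hfu _ (subset_convexHull ℝ _ (Or.inl ⟨B, hBp, rfl⟩))
    have h2 : f (B.mulVec (-x)) < u :=
      hfu _ (subset_convexHull ℝ _ (Or.inr ⟨B, hBp, rfl⟩))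
    rw [hfw] at h1 h2
    rw [Matrix.mulVec_neg, dotProduct_neg] at h2
    rw [abs_le]
    constructor <;> linarith
  have hsum : ∑ B ∈ FprodsLe 𝒜 p, |w ⬝ᵥ B.mulVec x| ≤ N * u := by
    calc ∑ B ∈ FprodsLe 𝒜 p, |w ⬝ᵥ B.mulVec x| ≤ ∑ B ∈ FprodsLe 𝒜 p, u :=
      Finset.sum_le_sum hbound
    _ = N * u := by rw [Finset.sum_const, hN, nsmul_eq_mul]
  have hkap' : κ * (‖w‖ * ‖x‖) ≤ N * u :=
    le_trans (hkap x w hxne hwne) hsum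
  -- upper bound on u
  have hup : u < ↑d * (‖w‖ * ‖y‖) := by
    have h1 : f y ≤ ↑d * (‖w‖ * ‖y‖) := by
      rw [hfw, dotProduct]
      calc ∑ i, w i * y i ≤ ∑ i : Fin d, ‖w‖ * ‖y‖ := by
            apply Finset.sum_le_sum
            intro i _
            calc w i * y i ≤ |w i * y i| := le_abs_self _
            _ = |w i| * |y i| := abs_mul _ _
            _ ≤ ‖w‖ * ‖y‖ := by
                apply mul_le_mul _ _ (abs_nonneg _) (norm_nonneg _)
                · have := norm_le_pi_norm w i; simpa [Real.norm_eq_abs] using this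
                · have := norm_le_pi_norm y i; simpa [Real.norm_eq_abs] using this
      _ = ↑d * (‖w‖ * ‖y‖) := by
            rw [Finset.sum_const, Finset.card_univ, Fintype.card_fin, nsmul_eq_mul]
    linarith [huy]
  -- norm bounds
  have hxnorm : b⁻¹ ≤ ‖x‖ := by
    have h1 := hble x
    rw [hx] at h1
    have h2 : b * b⁻¹ = 1 := mul_inv_cancel₀ hb.ne'
    nlinarith [norm_nonneg x]
  have hynorm : ‖y‖ ≤ (κ * a / (b * N * d * 2)) / a := by
    have h1 := hale y
    have h2 : ν y ≤ κ * a / (b * N * d * 2) := hy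
    rw [le_div_iff₀ ha]
    nlinarith
  have hwpos : 0 < ‖w‖ := norm_pos_iff.2 hwne
  -- contradiction
  have hc1 : κ * (‖w‖ * b⁻¹) ≤ N * u := by
    calc κ * (‖w‖ * b⁻¹) ≤ κ * (‖w‖ * ‖x‖) := by
          apply mul_le_mul_of_nonneg_left _ hκ.le
          exact mul_le_mul_of_nonneg_left hxnorm (norm_nonneg w)
    _ ≤ N * u := hkap'
  have hc2 : N * u < N * (↑d * (‖w‖ * ((κ * a / (b * N * d * 2)) / a))) := by
    apply mul_lt_mul_of_pos_left _ hNpos'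
    calc u < ↑d * (‖w‖ * ‖y‖) := hup
    _ ≤ ↑d * (‖w‖ * ((κ * a / (b * N * d * 2)) / a)) := by
        apply mul_le_mul_of_nonneg_left _ hdpos.le
        exact mul_le_mul_of_nonneg_left hynorm (norm_nonneg w)
  have hsimp : (N:ℝ) * (↑d * (‖w‖ * ((κ * a / (b * N * d * 2)) / a))) =
      κ * (‖w‖ * b⁻¹) / 2 := by
    field_simp
  rw [hsimp] at hc2
  have : 0 < κ * (‖w‖ * b⁻¹) := by positivity
  linarith

end S8
namespace S8
open Matrix
variable {d : ℕ}

/-- the admissible radii set -/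
def rset (ν : (Fin d → ℝ) → ℝ) (𝒜 : Finset (Matrix (Fin d) (Fin d) ℝ)) (p : ℕ)
    (x : Fin d → ℝ) : Set ℝ :=
  {t : ℝ | 0 ≤ t ∧ {y | ν y ≤ t} ⊆ convexHull ℝ (Tset ν 𝒜 p x)}

lemma chi_eq (ν : (Fin d → ℝ) → ℝ) (𝒜 : Finset (Matrix (Fin d) (Fin d) ℝ)) (p : ℕ) :
    chi ν (↑𝒜 : Set (Matrix (Fin d) (Fin d) ℝ)) p =
      sInf ((fun x => sSup (rset ν 𝒜 p x)) '' {x | ν x = 1}) := rfl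

section ChiFacts
variable {ν : (Fin d → ℝ) → ℝ} (hν : IsNorm ν)
  {𝒜 : Finset (Matrix (Fin d) (Fin d) ℝ)}
include hν

lemma convex_nu_ball (R : ℝ) : Convex ℝ {y : Fin d → ℝ | ν y ≤ R} := by
  intro y1 h1 y2 h2 a b ha hb hab
  have := hν.2.2.2 (a • y1) (b • y2)
  rw [nu_smul hν, nu_smul hν, abs_of_nonneg ha, abs_of_nonneg hb] at this
  have h1' : ν y1 ≤ R := h1
  have h2' : ν y2 ≤ R := h2
  show ν (a • y1 + b • y2) ≤ R
  nlinarith [hν.1 y1, hν.1 y2]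

lemma rset_bddAbove {p : ℕ} {x : Fin d → ℝ} (hx : ν x = 1) :
    BddAbove (rset ν 𝒜 p x) := by
  classical
  set R : ℝ := ∑ B ∈ FprodsLe 𝒜 p, (ν (B.mulVec x) + ν (B.mulVec (-x))) with hR
  have hterm : ∀ B ∈ FprodsLe 𝒜 p, (0:ℝ) ≤ ν (B.mulVec x) + ν (B.mulVec (-x)) :=
    fun B _ => add_nonneg (hν.1 _) (hν.1 _)
  have hhull : convexHull ℝ (Tset ν 𝒜 p x) ⊆ {y | ν y ≤ R} := by
    apply convexHull_min _ (convex_nu_ball hν R)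
    rintro z (⟨B, hB, rfl⟩ | ⟨B, hB, rfl⟩) <;>
    · have hBF : B ∈ FprodsLe 𝒜 p := by
        rw [← Finset.mem_coe, coe_FprodsLe]; exact hB
      have := Finset.single_le_sum hterm hBF
      show ν _ ≤ R
      rw [hR]
      nlinarith [hν.1 (B.mulVec x), hν.1 (B.mulVec (-x))]
  refine ⟨R, fun t ht => ?_⟩
  obtain ⟨ht0, hsub⟩ := ht
  have hmem : (t • x) ∈ {y | ν y ≤ t} := by
    show ν (t • x) ≤ t
    rw [nu_smul hν, hx, abs_of_nonneg ht0, mul_one]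
  have := hhull (hsub hmem)
  have h2 : ν (t • x) ≤ R := this
  rw [nu_smul hν, hx, abs_of_nonneg ht0, mul_one] at h2
  exact h2

lemma c_mem_rset {p : ℕ} {c : ℝ} (hc : 0 < c)
    (hcsub : ∀ x : Fin d → ℝ, ν x = 1 → {y | ν y ≤ c} ⊆ convexHull ℝ (Tset ν 𝒜 p x))
    {x : Fin d → ℝ} (hx : ν x = 1) : c ∈ rset ν 𝒜 p x :=
  ⟨hc.le, hcsub x hx⟩

lemma chi_pos (h𝒜 : 𝒜.Nonempty)
    (hirr : MatSetIrreducible (↑𝒜 : Set (Matrix (Fin d) (Fin d) ℝ))) (hd : 0 < d)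
    {p : ℕ} (hp : d - 1 ≤ p) :
    0 < chi ν (↑𝒜 : Set (Matrix (Fin d) (Fin d) ℝ)) p := by
  obtain ⟨c, hc, hcsub⟩ := chi_lb hν hirr hd hp
  have h1 : c ≤ chi ν (↑𝒜 : Set (Matrix (Fin d) (Fin d) ℝ)) p := by
    rw [chi_eq]
    apply le_csInf ((sphere_nu_nonempty hν hd).image _)
    rintro _ ⟨x, hx, rfl⟩
    exact le_csSup (rset_bddAbove hν hx) (c_mem_rset hν hc hcsub hx)
  linarith

lemma chi_le_r {p : ℕ} {x : Fin d → ℝ} (hx : ν x = 1)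
    (hirr : MatSetIrreducible (↑𝒜 : Set (Matrix (Fin d) (Fin d) ℝ))) (hd : 0 < d)
    (hp : d - 1 ≤ p) :
    chi ν (↑𝒜 : Set (Matrix (Fin d) (Fin d) ℝ)) p ≤ sSup (rset ν 𝒜 p x) := by
  obtain ⟨c, hc, hcsub⟩ := chi_lb hν hirr hd hp
  rw [chi_eq]
  apply csInf_le
  · refine ⟨0, ?_⟩
    rintro _ ⟨x', hx', rfl⟩
    calc (0:ℝ) ≤ c := hc.le
    _ ≤ sSup (rset ν 𝒜 p x') := le_csSup (rset_bddAbove hν hx') (c_mem_rset hν hc hcsub hx')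
  · exact ⟨x, hx, rfl⟩

lemma ball_subset_of_lt_chi (h𝒜 : 𝒜.Nonempty)
    (hirr : MatSetIrreducible (↑𝒜 : Set (Matrix (Fin d) (Fin d) ℝ))) (hd : 0 < d)
    {p : ℕ} (hp : d - 1 ≤ p) {t : ℝ}
    (ht : t < chi ν (↑𝒜 : Set (Matrix (Fin d) (Fin d) ℝ)) p)
    {x : Fin d → ℝ} (hx : ν x = 1) :
    ∃ t' ∈ rset ν 𝒜 p x, t < t' := by
  obtain ⟨c, hc, hcsub⟩ := chi_lb hν hirr hd hp
  have hne : (rset ν 𝒜 p x).Nonempty := ⟨c, c_mem_rset hν hc hcsub hx⟩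
  exact exists_lt_of_lt_csSup hne (lt_of_lt_of_le ht (chi_le_r hν hx hirr hd hp))

end ChiFacts
end S8
namespace S8
open Matrix
variable {d : ℕ}

noncomputable def FR (𝒜 : Finset (Matrix (Fin d) (Fin d) ℝ)) (p n : ℕ) :
    Finset (Matrix (Fin d) (Fin d) ℝ) := by
  classical exact (Finset.range (p+1)).biUnion (fun k => Fprods 𝒜 (n+k))

lemma FR_nonempty {𝒜 : Finset (Matrix (Fin d) (Fin d) ℝ)} (h𝒜 : 𝒜.Nonempty) (p n : ℕ) :
    (FR 𝒜 p n).Nonempty := by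
  classical
  obtain ⟨R, hR⟩ := Fprods_nonempty h𝒜 n
  exact ⟨R, by
    simp only [FR]
    exact Finset.mem_biUnion.2 ⟨0, Finset.mem_range.2 (Nat.succ_pos p), by simpa using hR⟩⟩

lemma convexOn_nu_mulVec {ν : (Fin d → ℝ) → ℝ} (hν : IsNorm ν)
    (PP : Matrix (Fin d) (Fin d) ℝ) :
    ConvexOn ℝ Set.univ (fun z => ν (PP.mulVec z)) := by
  refine ⟨convex_univ, fun y1 _ y2 _ a b ha hb hab => ?_⟩
  have h1 : PP.mulVec (a • y1 + b • y2) = a • PP.mulVec y1 + b • PP.mulVec y2 := by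
    rw [Matrix.mulVec_add, Matrix.mulVec_smul, Matrix.mulVec_smul]
  simp only
  rw [h1]
  calc ν (a • PP.mulVec y1 + b • PP.mulVec y2)
      ≤ ν (a • PP.mulVec y1) + ν (b • PP.mulVec y2) := hν.2.2.2 _ _
  _ = a * ν (PP.mulVec y1) + b * ν (PP.mulVec y2) := by
      rw [nu_smul hν, nu_smul hν, abs_of_nonneg ha, abs_of_nonneg hb]

lemma key_ineq {ν : (Fin d → ℝ) → ℝ} (hν : IsNorm ν)
    {𝒜 : Finset (Matrix (Fin d) (Fin d) ℝ)} (h𝒜 : 𝒜.Nonempty)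
    (hirr : MatSetIrreducible (↑𝒜 : Set (Matrix (Fin d) (Fin d) ℝ))) (hd : 0 < d)
    {p : ℕ} (hp : d - 1 ≤ p) (n : ℕ) {x : Fin d → ℝ} (hx : ν x = 1) :
    chi ν (↑𝒜 : Set (Matrix (Fin d) (Fin d) ℝ)) p *
      supNu ν (↑𝒜 : Set (Matrix (Fin d) (Fin d) ℝ)) n ≤
    (FR 𝒜 p n).sup' (FR_nonempty h𝒜 p n) (fun R => ν (R.mulVec x)) := by
  classical
  set M := (FR 𝒜 p n).sup' (FR_nonempty h𝒜 p n) (fun R => ν (R.mulVec x)) with hM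
  have hM0 : 0 ≤ M := by
    obtain ⟨R0, hR0⟩ := FR_nonempty h𝒜 p n
    exact le_trans (hν.1 (R0.mulVec x)) (Finset.le_sup' (fun R => ν (R.mulVec x)) hR0)
  -- step 1
  have step1 : ∀ t' ∈ rset ν 𝒜 p x, ∀ PP ∈ prods (↑𝒜 : Set (Matrix (Fin d) (Fin d) ℝ)) n,
      ∀ u : Fin d → ℝ, ν u = 1 → t' * ν (PP.mulVec u) ≤ M := by
    rintro t' ⟨ht'0, hsub⟩ PP hPP u hu
    have hz : (t' • u) ∈ convexHull ℝ (Tset ν 𝒜 p x) := by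
      apply hsub
      show ν (t' • u) ≤ t'
      rw [nu_smul hν, hu, abs_of_nonneg ht'0, mul_one]
    obtain ⟨w, hwT, hle⟩ := (convexOn_nu_mulVec hν PP).exists_ge_of_mem_convexHull
      (Set.subset_univ _) hz
    have hval : ν (PP.mulVec (t' • u)) = t' * ν (PP.mulVec u) := by
      rw [Matrix.mulVec_smul, nu_smul hν, abs_of_nonneg ht'0]
    rw [hval] at hle
    -- bound ν (PP.mulVec w) by M
    have hmemFR : ∀ {k : ℕ} {B : Matrix (Fin d) (Fin d) ℝ}, k ∈ Finset.range (p+1) →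
        B ∈ prods (↑𝒜 : Set (Matrix (Fin d) (Fin d) ℝ)) k → PP * B ∈ FR 𝒜 p n := by
      intro k B hk hBk
      have h1 : PP * B ∈ prods (↑𝒜 : Set (Matrix (Fin d) (Fin d) ℝ)) (n + k) :=
        mem_prods_mul hPP hBk
      rw [← coe_Fprods, Finset.mem_coe] at h1
      simp only [FR]
      exact Finset.mem_biUnion.2 ⟨k, hk, h1⟩
    have hwM : ν (PP.mulVec w) ≤ M := by
      rcases hwT with ⟨B, hB, rfl⟩ | ⟨B, hB, rfl⟩
      · obtain ⟨k, hk, hBk⟩ := Set.mem_iUnion₂.1 hB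
        have h2 : ν (PP.mulVec (B.mulVec x)) = ν ((PP * B).mulVec x) := by
          rw [Matrix.mulVec_mulVec]
        rw [h2]
        exact Finset.le_sup' (f := fun R => ν (R.mulVec x)) (hmemFR hk hBk)
      · obtain ⟨k, hk, hBk⟩ := Set.mem_iUnion₂.1 hB
        have h2 : ν (PP.mulVec (B.mulVec (-x))) = ν ((PP * B).mulVec x) := by
          rw [Matrix.mulVec_neg, Matrix.mulVec_neg, nu_neg hν, Matrix.mulVec_mulVec]
        rw [h2]
        exact Finset.le_sup' (f := fun R => ν (R.mulVec x)) (hmemFR hk hBk)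
    exact le_trans hle hwM
  -- step 2
  have step2 : ∀ t' ∈ rset ν 𝒜 p x,
      t' * supNu ν (↑𝒜 : Set (Matrix (Fin d) (Fin d) ℝ)) n ≤ M := by
    intro t' ht'
    rcases eq_or_lt_of_le ht'.1 with h0 | hpos
    · rw [← h0, zero_mul]; exact hM0
    · have hS : supNu ν (↑𝒜 : Set (Matrix (Fin d) (Fin d) ℝ)) n ≤ M / t' := by
        apply supNu_le h𝒜
        intro P hP
        apply opNorm_le_of hν hd
        intro u hu
        rw [le_div_iff₀ hpos]
        calc ν (P.mulVec u) * t' = t' * ν (P.mulVec u) := mul_comm _ _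
        _ ≤ M := step1 t' ht' P hP u hu
      calc t' * supNu ν (↑𝒜 : Set (Matrix (Fin d) (Fin d) ℝ)) n ≤ t' * (M / t') :=
        mul_le_mul_of_nonneg_left hS hpos.le
      _ = M := by field_simp
  -- step 3
  set S := supNu ν (↑𝒜 : Set (Matrix (Fin d) (Fin d) ℝ)) n with hSdef
  have hS0 : 0 ≤ S := supNu_nonneg hν n
  rcases eq_or_lt_of_le hS0 with h0 | hSpos
  · rw [← h0, mul_zero]; exact hM0
  · have hr : sSup (rset ν 𝒜 p x) ≤ M / S := by
      obtain ⟨c, hc, hcsub⟩ := chi_lb hν hirr hd hp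
      apply csSup_le ⟨c, c_mem_rset hν hc hcsub hx⟩
      intro t' ht'
      rw [le_div_iff₀ hSpos]
      exact step2 t' ht'
    have := le_trans (chi_le_r hν hx hirr hd hp) hr
    calc chi ν (↑𝒜 : Set (Matrix (Fin d) (Fin d) ℝ)) p * S ≤ (M / S) * S :=
      mul_le_mul_of_nonneg_right this hSpos.le
    _ = M := by field_simp

end S8
namespace S8
open Matrix Filter Real
variable {d : ℕ}

set_option maxHeartbeats 1600000 in
lemma supNu_le_eta {ν : (Fin d → ℝ) → ℝ} (hν : IsNorm ν)
    {𝒜 : Finset (Matrix (Fin d) (Fin d) ℝ)} (h𝒜 : 𝒜.Nonempty)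
    (hirr : MatSetIrreducible (↑𝒜 : Set (Matrix (Fin d) (Fin d) ℝ))) (hd : 0 < d)
    {p : ℕ} (hp : d - 1 ≤ p) (n : ℕ) (hn : 1 ≤ n) :
    chi ν (↑𝒜 : Set (Matrix (Fin d) (Fin d) ℝ)) p *
      supNu ν (↑𝒜 : Set (Matrix (Fin d) (Fin d) ℝ)) n ≤
    max 1 ((jsrNu ν (↑𝒜 : Set (Matrix (Fin d) (Fin d) ℝ))) ^ p) *
      (jsrNu ν (↑𝒜 : Set (Matrix (Fin d) (Fin d) ℝ))) ^ n := by
  classical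
  by_contra hcon
  push_neg at hcon
  set ρ := jsrNu ν (↑𝒜 : Set (Matrix (Fin d) (Fin d) ℝ)) with hρdef
  set c0 := chi ν (↑𝒜 : Set (Matrix (Fin d) (Fin d) ℝ)) p *
    supNu ν (↑𝒜 : Set (Matrix (Fin d) (Fin d) ℝ)) n with hc0def
  have hρ0 : 0 ≤ ρ := jsr_nonneg hν h𝒜 hd
  have hM1 : (1:ℝ) ≤ max 1 (ρ^p) := le_max_left _ _
  have hMρn : (0:ℝ) ≤ max 1 (ρ^p) * ρ^n := by positivity
  have hc0pos : 0 < c0 := lt_of_le_of_lt hMρn hcon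
  have hstep : ∀ x : Fin d → ℝ, ν x = 1 → ∃ k, k ≤ p ∧
      ∃ R ∈ prods (↑𝒜 : Set (Matrix (Fin d) (Fin d) ℝ)) (n+k), c0 ≤ ν (R.mulVec x) := by
    intro x hx
    have hki := key_ineq hν h𝒜 hirr hd hp n hx
    obtain ⟨R, hR, hReq⟩ := Finset.exists_mem_eq_sup' (FR_nonempty h𝒜 p n)
      (fun R => ν (R.mulVec x))
    rw [hReq] at hki
    simp only [FR] at hR
    obtain ⟨k, hk, hRk⟩ := Finset.mem_biUnion.1 hR
    have hkp : k ≤ p := by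
      have := Finset.mem_range.1 hk; omega
    rw [← Finset.mem_coe, coe_Fprods] at hRk
    exact ⟨k, hkp, R, hRk, hki⟩
  have hiter : ∀ j : ℕ, ∀ x : Fin d → ℝ, ν x = 1 →
      ∃ m, n*j ≤ m ∧ m ≤ (n+p)*j ∧
        ∃ P ∈ prods (↑𝒜 : Set (Matrix (Fin d) (Fin d) ℝ)) m, c0^j ≤ ν (P.mulVec x) := by
    intro j
    induction j with
    | zero =>
      intro x hx
      refine ⟨0, by simp, by simp, 1, ?_, ?_⟩
      · rw [prods_zero]; rfl
      · rw [Matrix.one_mulVec, hx, pow_zero]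
    | succ j ih =>
      intro x hx
      obtain ⟨k, hk, R, hR, hRx⟩ := hstep x hx
      have hRxpos : 0 < ν (R.mulVec x) := lt_of_lt_of_le hc0pos hRx
      set x' := (ν (R.mulVec x))⁻¹ • R.mulVec x with hx'def
      have hx' : ν x' = 1 := by
        rw [hx'def, nu_smul hν, abs_of_pos (inv_pos.2 hRxpos)]
        field_simp
      obtain ⟨m, hm1, hm2, P, hP, hPx⟩ := ih x' hx'
      refine ⟨m + (n + k), by nlinarith, by nlinarith, P * R, mem_prods_mul hP hR, ?_⟩
      have hcomp : (P * R).mulVec x = ν (R.mulVec x) • P.mulVec x' := by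
        rw [← Matrix.mulVec_mulVec, hx'def, Matrix.mulVec_smul, smul_smul,
          mul_inv_cancel₀ hRxpos.ne', one_smul]
      rw [hcomp, nu_smul hν, abs_of_pos hRxpos, pow_succ]
      have hmul := mul_le_mul hRx hPx (pow_nonneg hc0pos.le j) (hν.1 _)
      nlinarith
  obtain ⟨x0, hx0⟩ := sphere_nu_nonempty hν hd
  have hx0' : ν x0 = 1 := hx0
  have hSm : ∀ j : ℕ, ∃ m, n*j ≤ m ∧ m ≤ (n+p)*j ∧
      c0^j ≤ supNu ν (↑𝒜 : Set (Matrix (Fin d) (Fin d) ℝ)) m := by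
    intro j
    obtain ⟨m, h1, h2, P, hP, hPx⟩ := hiter j x0 hx0'
    exact ⟨m, h1, h2, le_trans hPx (le_trans (le_opNorm hν hx0') (le_supNu hP))⟩
  have hnp : (0:ℝ) < ((n+p:ℕ):ℝ) := by
    have : 0 < n + p := by omega
    exact_mod_cast this
  have hn0 : (0:ℝ) < ((n:ℕ):ℝ) := by exact_mod_cast hn
  rcases le_or_gt 1 c0 with hc1 | hc1
  · -- c0 ≥ 1 : use exponent 1/(n+p)
    set e : ℝ := ((n+p : ℕ) : ℝ)⁻¹ with he
    have hfreq : ∃ᶠ m in atTop, c0 ^ e ≤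
        (supNu ν (↑𝒜 : Set (Matrix (Fin d) (Fin d) ℝ)) m) ^ ((m:ℝ)⁻¹) := by
      rw [frequently_atTop]
      intro J
      obtain ⟨m, h1, h2, h3⟩ := hSm (J+1)
      have hmJ : J ≤ m := by nlinarith
      have hm1 : 1 ≤ m := by nlinarith
      have hmpos : (0:ℝ) < m := by exact_mod_cast hm1
      refine ⟨m, hmJ, ?_⟩
      have h4 : ((c0 ^ (J+1) : ℝ)) ^ ((m:ℝ)⁻¹) ≤
          (supNu ν (↑𝒜 : Set (Matrix (Fin d) (Fin d) ℝ)) m) ^ ((m:ℝ)⁻¹) :=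
        Real.rpow_le_rpow (pow_nonneg hc0pos.le _) h3 (by positivity)
      refine le_trans ?_ h4
      rw [← Real.rpow_natCast c0 (J+1), ← Real.rpow_mul hc0pos.le]
      apply Real.rpow_le_rpow_of_exponent_le hc1
      rw [he]
      have hcast : (m:ℝ) ≤ ((n+p:ℕ):ℝ) * (((J+1:ℕ)):ℝ) := by
        have h5 : m ≤ (n+p) * (J+1) := h2
        exact_mod_cast h5
      calc ((n+p:ℕ):ℝ)⁻¹ = 1/((n+p:ℕ):ℝ) := (one_div _).symm
      _ ≤ (((J+1:ℕ)):ℝ)/(m:ℝ) := by rw [div_le_div_iff₀ hnp hmpos]; nlinarith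
      _ = (((J+1:ℕ)):ℝ) * (m:ℝ)⁻¹ := div_eq_mul_inv _ _
    have hρge : c0 ^ e ≤ ρ := le_jsr_of_frequently hν h𝒜 hd hfreq
    have hc0le : c0 ≤ ρ ^ (n+p) := by
      have h5 : (c0 ^ e) ^ (n+p) ≤ ρ ^ (n+p) :=
        pow_le_pow_left₀ (Real.rpow_nonneg hc0pos.le _) hρge _
      refine le_trans (le_of_eq ?_) h5
      rw [← Real.rpow_natCast (c0 ^ e) (n+p), ← Real.rpow_mul hc0pos.le, he,
        inv_mul_cancel₀ hnp.ne', Real.rpow_one]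
    have h6 : ρ ^ (n+p) = ρ^n * ρ^p := pow_add ρ n p
    have h7 : ρ^p ≤ max 1 (ρ^p) := le_max_right _ _
    have h8 : (0:ℝ) ≤ ρ^n := pow_nonneg hρ0 n
    nlinarith
  · -- c0 < 1 : use exponent 1/n
    set e : ℝ := ((n : ℕ) : ℝ)⁻¹ with he
    have hfreq : ∃ᶠ m in atTop, c0 ^ e ≤
        (supNu ν (↑𝒜 : Set (Matrix (Fin d) (Fin d) ℝ)) m) ^ ((m:ℝ)⁻¹) := by
      rw [frequently_atTop]
      intro J
      obtain ⟨m, h1, h2, h3⟩ := hSm (J+1)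
      have hmJ : J ≤ m := by nlinarith
      have hm1 : 1 ≤ m := by nlinarith
      have hmpos : (0:ℝ) < m := by exact_mod_cast hm1
      refine ⟨m, hmJ, ?_⟩
      have h4 : ((c0 ^ (J+1) : ℝ)) ^ ((m:ℝ)⁻¹) ≤
          (supNu ν (↑𝒜 : Set (Matrix (Fin d) (Fin d) ℝ)) m) ^ ((m:ℝ)⁻¹) :=
        Real.rpow_le_rpow (pow_nonneg hc0pos.le _) h3 (by positivity)
      refine le_trans ?_ h4
      rw [← Real.rpow_natCast c0 (J+1), ← Real.rpow_mul hc0pos.le]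
      apply Real.rpow_le_rpow_of_exponent_ge hc0pos hc1.le
      rw [he]
      have hcast : ((n:ℕ):ℝ) * (((J+1:ℕ)):ℝ) ≤ (m:ℝ) := by
        have h5 : n * (J+1) ≤ m := h1
        exact_mod_cast h5
      calc (((J+1:ℕ)):ℝ) * (m:ℝ)⁻¹ = (((J+1:ℕ)):ℝ)/(m:ℝ) := (div_eq_mul_inv _ _).symm
      _ ≤ 1/((n:ℕ):ℝ) := by rw [div_le_div_iff₀ hmpos hn0]; nlinarith
      _ = ((n:ℕ):ℝ)⁻¹ := one_div _
    have hρge : c0 ^ e ≤ ρ := le_jsr_of_frequently hν h𝒜 hd hfreq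
    have hc0le : c0 ≤ ρ ^ n := by
      have h5 : (c0 ^ e) ^ n ≤ ρ ^ n :=
        pow_le_pow_left₀ (Real.rpow_nonneg hc0pos.le _) hρge _
      refine le_trans (le_of_eq ?_) h5
      rw [← Real.rpow_natCast (c0 ^ e) n, ← Real.rpow_mul hc0pos.le, he,
        inv_mul_cancel₀ hn0.ne', Real.rpow_one]
    have h8 : (0:ℝ) ≤ ρ^n := pow_nonneg hρ0 n
    nlinarith

end S8

/-- main theorem, first part: for irreducible `𝒜` and `p ≥ d − 1`,
`ρ(𝒜) ≤ ‖𝒜ⁿ‖^{1/n} ≤ (η_p(𝒜))^{1/n} ρ(𝒜)` with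
`η_p(𝒜) = max{1, ρ(𝒜)^p} / χ_p(𝒜)`. -/
theorem statement8 {d : ℕ} (𝒜 : Finset (Matrix (Fin d) (Fin d) ℝ)) (h𝒜 : 𝒜.Nonempty)
    (ν : (Fin d → ℝ) → ℝ) (hν : IsNorm ν)
    (hirr : MatSetIrreducible (↑𝒜 : Set (Matrix (Fin d) (Fin d) ℝ)))
    (p : ℕ) (hp : d - 1 ≤ p) (n : ℕ) (hn : 1 ≤ n) :
    jsrNu ν (↑𝒜 : Set (Matrix (Fin d) (Fin d) ℝ)) ≤
      (supNu ν (↑𝒜 : Set (Matrix (Fin d) (Fin d) ℝ)) n) ^ ((n : ℝ)⁻¹) ∧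
    (supNu ν (↑𝒜 : Set (Matrix (Fin d) (Fin d) ℝ)) n) ^ ((n : ℝ)⁻¹) ≤
      ((max 1 ((jsrNu ν (↑𝒜 : Set (Matrix (Fin d) (Fin d) ℝ))) ^ p) /
          chi ν (↑𝒜 : Set (Matrix (Fin d) (Fin d) ℝ)) p) ^ ((n : ℝ)⁻¹)) *
        jsrNu ν (↑𝒜 : Set (Matrix (Fin d) (Fin d) ℝ)) := by
  have hn0 : (0:ℝ) < (n:ℝ) := by exact_mod_cast hn
  have hninv : ((n:ℝ))⁻¹ ≠ 0 := (inv_pos.2 hn0).ne'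
  rcases Nat.eq_zero_or_pos d with hd0 | hd
  · subst hd0
    -- degenerate case d = 0
    have hopz : ∀ A : Matrix (Fin 0) (Fin 0) ℝ, opNorm ν A = 0 := by
      intro A
      unfold opNorm
      have hemp : {x : Fin 0 → ℝ | ν x = 1} = ∅ := by
        ext x
        simp only [Set.mem_setOf_eq, Set.mem_empty_iff_false, iff_false]
        have hx0 : x = 0 := funext fun i => isEmptyElim i
        rw [hx0, S8.nu_zero hν]
        norm_num
      rw [hemp, Set.image_empty, Real.sSup_empty]
    have hSz : ∀ m : ℕ, supNu ν (↑𝒜 : Set (Matrix (Fin 0) (Fin 0) ℝ)) m = 0 := by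
      intro m
      show sSup (opNorm ν '' prods (↑𝒜 : Set (Matrix (Fin 0) (Fin 0) ℝ)) m) = 0
      have himg : opNorm ν '' prods (↑𝒜 : Set (Matrix (Fin 0) (Fin 0) ℝ)) m = {0} := by
        apply Set.eq_singleton_iff_nonempty_unique_mem.2
        refine ⟨(S8.prods_nonempty h𝒜 m).image _, ?_⟩
        rintro y ⟨P, -, rfl⟩
        exact hopz P
      rw [himg, csSup_singleton]
    have hjz : jsrNu ν (↑𝒜 : Set (Matrix (Fin 0) (Fin 0) ℝ)) = 0 := by
      show Filter.limsup
        (fun m : ℕ => (supN (opNorm ν) (↑𝒜 : Set (Matrix (Fin 0) (Fin 0) ℝ)) m) ^ ((m:ℝ)⁻¹))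
        Filter.atTop = 0
      have hev : (fun m : ℕ =>
          (supN (opNorm ν) (↑𝒜 : Set (Matrix (Fin 0) (Fin 0) ℝ)) m) ^ ((m:ℝ)⁻¹))
          =ᶠ[Filter.atTop] (fun _ => (0:ℝ)) := by
        filter_upwards [Filter.eventually_ge_atTop 1] with m hm
        have hmm : supN (opNorm ν) (↑𝒜 : Set (Matrix (Fin 0) (Fin 0) ℝ)) m = 0 := hSz m
        have hm0 : (0:ℝ) < (m:ℝ) := by exact_mod_cast hm
        rw [hmm, Real.zero_rpow (inv_pos.2 hm0).ne']
      rw [Filter.limsup_congr hev, Filter.limsup_const]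
    constructor
    · rw [hjz, hSz n]
      exact Real.rpow_nonneg le_rfl _
    · rw [hjz, hSz n, mul_zero, Real.zero_rpow hninv]
  · -- main case d ≥ 1
    refine ⟨S8.jsr_le_root hν h𝒜 hd n hn, ?_⟩
    have hkey := S8.supNu_le_eta hν h𝒜 hirr hd hp n hn
    have hχ := S8.chi_pos hν h𝒜 hirr hd hp
    have hρ0 := S8.jsr_nonneg hν h𝒜 hd
    have hS0 := S8.supNu_nonneg (𝒜 := 𝒜) hν n
    have hMnn : (0:ℝ) ≤ max 1 ((jsrNu ν (↑𝒜 : Set (Matrix (Fin d) (Fin d) ℝ))) ^ p) :=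
      le_trans zero_le_one (le_max_left _ _)
    have h1 : supNu ν (↑𝒜 : Set (Matrix (Fin d) (Fin d) ℝ)) n ≤
        (max 1 ((jsrNu ν (↑𝒜 : Set (Matrix (Fin d) (Fin d) ℝ))) ^ p) /
          chi ν (↑𝒜 : Set (Matrix (Fin d) (Fin d) ℝ)) p) *
        (jsrNu ν (↑𝒜 : Set (Matrix (Fin d) (Fin d) ℝ))) ^ n := by
      rw [div_mul_eq_mul_div, le_div_iff₀ hχ]
      calc supNu ν (↑𝒜 : Set (Matrix (Fin d) (Fin d) ℝ)) n *
          chi ν (↑𝒜 : Set (Matrix (Fin d) (Fin d) ℝ)) p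
          = chi ν (↑𝒜 : Set (Matrix (Fin d) (Fin d) ℝ)) p *
            supNu ν (↑𝒜 : Set (Matrix (Fin d) (Fin d) ℝ)) n := mul_comm _ _
      _ ≤ _ := hkey
    have h2 : (supNu ν (↑𝒜 : Set (Matrix (Fin d) (Fin d) ℝ)) n) ^ ((n:ℝ)⁻¹) ≤
        ((max 1 ((jsrNu ν (↑𝒜 : Set (Matrix (Fin d) (Fin d) ℝ))) ^ p) /
          chi ν (↑𝒜 : Set (Matrix (Fin d) (Fin d) ℝ)) p) *
        (jsrNu ν (↑𝒜 : Set (Matrix (Fin d) (Fin d) ℝ))) ^ n) ^ ((n:ℝ)⁻¹) :=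
      Real.rpow_le_rpow hS0 h1 (by positivity)
    have h3 : ((max 1 ((jsrNu ν (↑𝒜 : Set (Matrix (Fin d) (Fin d) ℝ))) ^ p) /
          chi ν (↑𝒜 : Set (Matrix (Fin d) (Fin d) ℝ)) p) *
        (jsrNu ν (↑𝒜 : Set (Matrix (Fin d) (Fin d) ℝ))) ^ n) ^ ((n:ℝ)⁻¹) =
        ((max 1 ((jsrNu ν (↑𝒜 : Set (Matrix (Fin d) (Fin d) ℝ))) ^ p) /
          chi ν (↑𝒜 : Set (Matrix (Fin d) (Fin d) ℝ)) p) ^ ((n:ℝ)⁻¹)) *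
        jsrNu ν (↑𝒜 : Set (Matrix (Fin d) (Fin d) ℝ)) := by
      rw [Real.mul_rpow (div_nonneg hMnn hχ.le) (pow_nonneg hρ0 n)]
      congr 1
      rw [← Real.rpow_natCast (jsrNu ν (↑𝒜 : Set (Matrix (Fin d) (Fin d) ℝ))) n,
        ← Real.rpow_mul hρ0, mul_inv_cancel₀ hn0.ne', Real.rpow_one]
    rw [h3] at h2
    exact h2
end
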